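/- arXiv:1805.10409 — 9 statements merged into one kernel-verified Lean document; each statement's English description precedes it below -/
import Mathlib

section
/- For all positive integers n and e, the cardinality of the n-dimensional Lee ball of radius e equals the sum over i from 0 to min(n,e) of 2^i * C(n,i) * C(e,i). -/
open Finset

noncomputable def lball (n r : ℕ) : Finset (Fin n → ℤ) :=
  (Fintype.piFinset fun _ => Finset.Icc (-(r:ℤ)) (r:ℤ)).filter fun x => ∑ i, |x i| ≤ (r:ℤ)

lemma mem_lball {n r : ℕ} {x : Fin n → ℤ} : x ∈ lball n r ↔ ∑ i, |x i| ≤ (r:ℤ) := by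
  constructor
  · exact fun h => (Finset.mem_filter.mp h).2
  · intro h
    refine Finset.mem_filter.mpr ⟨?_, h⟩
    rw [Fintype.mem_piFinset]
    intro i
    rw [Finset.mem_Icc, ← abs_le]
    exact le_trans (Finset.single_le_sum (f := fun j => |x j|) (fun j _ => abs_nonneg _) (Finset.mem_univ i)) h

noncomputable def Kc (n r : ℕ) : ℕ := (lball n r).card

lemma Kc_zero_right (n : ℕ) : Kc n 0 = 1 := by
  apply Finset.card_eq_one.mpr
  refine ⟨fun _ => 0, ?_⟩
  ext x
  simp only [mem_lball, Finset.mem_singleton]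
  constructor
  · intro h
    funext i
    have h0 : ∀ j ∈ Finset.univ, (0:ℤ) ≤ |x j| := fun j _ => abs_nonneg _
    have := (Finset.sum_eq_zero_iff_of_nonneg h0).mp
      (le_antisymm (by simpa using h) (Finset.sum_nonneg h0)) i (Finset.mem_univ i)
    simpa [abs_eq_zero] using this
  · rintro rfl; simp

lemma Kc_zero_left (r : ℕ) : Kc 0 r = 1 := by
  apply Finset.card_eq_one.mpr
  refine ⟨fun i => 0, ?_⟩
  ext x
  simp [mem_lball, Subsingleton.elim x fun _ => 0]

lemma sum_abs_split {n : ℕ} (x : Fin (n+1) → ℤ) :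
    ∑ i, |x i| = ∑ i : Fin n, |x i.castSucc| + |x (Fin.last n)| :=
  Fin.sum_univ_castSucc fun i => |x i|

lemma mem_lball' {n r : ℕ} {x : Fin (n+1) → ℤ} :
    x ∈ lball (n+1) r ↔ ∑ i : Fin n, |x i.castSucc| + |x (Fin.last n)| ≤ (r:ℤ) := by
  rw [mem_lball, sum_abs_split]

lemma update_castSucc {n : ℕ} (x : Fin (n+1) → ℤ) (v : ℤ) (i : Fin n) :
    Function.update x (Fin.last n) v i.castSucc = x i.castSucc :=
  Function.update_of_ne (Fin.castSucc_lt_last _).ne _ _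

lemma card_last_zero (n r : ℕ) :
    ((lball (n+1) r).filter fun x => x (Fin.last n) = 0).card = Kc n r := by
  refine Finset.card_bij' (fun x _ => Fin.init x) (fun y _ => Fin.snoc y 0) ?_ ?_ ?_ ?_
  · intro x hx
    rw [Finset.mem_filter, mem_lball'] at hx
    rw [mem_lball]
    obtain ⟨h1, h2⟩ := hx
    rw [h2] at h1
    show ∑ i : Fin n, |x i.castSucc| ≤ (r:ℤ)
    simpa using h1
  · intro y hy
    rw [mem_lball] at hy
    rw [Finset.mem_filter, mem_lball']
    refine ⟨?_, by simp⟩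
    simpa using hy
  · intro x hx
    have hx2 := (Finset.mem_filter.mp hx).2
    have h := Fin.snoc_init_self x
    rw [hx2] at h
    exact h
  · intro y _
    simp

lemma card_neg_pos (n r : ℕ) :
    ((lball (n+1) r).filter fun x => x (Fin.last n) < 0).card =
    ((lball (n+1) r).filter fun x => 0 < x (Fin.last n)).card := by
  have key : ∀ (x : Fin (n+1) → ℤ), x ∈ lball (n+1) r →
      Function.update x (Fin.last n) (-(x (Fin.last n))) ∈ lball (n+1) r := by
    intro x hx
    rw [mem_lball'] at hx ⊢
    rw [Function.update_self, abs_neg]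
    calc ∑ i : Fin n, |Function.update x (Fin.last n) (-x (Fin.last n)) i.castSucc| + |x (Fin.last n)|
        = ∑ i : Fin n, |x i.castSucc| + |x (Fin.last n)| := by
          congr 1
          exact Finset.sum_congr rfl fun i _ => by rw [update_castSucc]
      _ ≤ r := hx
  have inv : ∀ (x : Fin (n+1) → ℤ),
      Function.update (Function.update x (Fin.last n) (-(x (Fin.last n)))) (Fin.last n)
        (-(Function.update x (Fin.last n) (-(x (Fin.last n))) (Fin.last n))) = x := by
    intro x
    funext i
    rcases eq_or_ne i (Fin.last n) with rfl | h
    · simp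
    · simp [Function.update_of_ne h]
  refine Finset.card_bij'
    (fun x _ => Function.update x (Fin.last n) (-(x (Fin.last n))))
    (fun x _ => Function.update x (Fin.last n) (-(x (Fin.last n)))) ?_ ?_ ?_ ?_
  · intro x hx
    obtain ⟨hx1, hx2⟩ := Finset.mem_filter.mp hx
    exact Finset.mem_filter.mpr ⟨key x hx1, by simp; omega⟩
  · intro x hx
    obtain ⟨hx1, hx2⟩ := Finset.mem_filter.mp hx
    exact Finset.mem_filter.mpr ⟨key x hx1, by simp; omega⟩
  · intro x _; exact inv x
  · intro x _; exact inv x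

lemma card_shift (n e : ℕ) :
    ((lball (n+1) (e+1)).filter fun x => 0 < x (Fin.last n)).card =
    ((lball (n+1) e).filter fun x => 0 ≤ x (Fin.last n)).card := by
  refine Finset.card_bij'
    (fun x _ => Function.update x (Fin.last n) (x (Fin.last n) - 1))
    (fun x _ => Function.update x (Fin.last n) (x (Fin.last n) + 1)) ?_ ?_ ?_ ?_
  · intro x hx
    rw [Finset.mem_filter, mem_lball'] at hx
    obtain ⟨hx1, hx2⟩ := hx
    rw [Finset.mem_filter, mem_lball', Function.update_self]
    have hsum : ∑ i : Fin n, |Function.update x (Fin.last n) (x (Fin.last n) - 1) i.castSucc|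
        = ∑ i : Fin n, |x i.castSucc| := Finset.sum_congr rfl fun i _ => by rw [update_castSucc]
    rw [hsum]
    have h1 : |x (Fin.last n)| = x (Fin.last n) := abs_of_pos hx2
    have h2 : |x (Fin.last n) - 1| = x (Fin.last n) - 1 := abs_of_nonneg (by omega)
    rw [h1] at hx1
    rw [h2]
    push_cast at hx1 ⊢
    constructor
    · linarith
    · simpa using (by omega : 1 ≤ x (Fin.last n))
  · intro x hx
    rw [Finset.mem_filter, mem_lball'] at hx
    obtain ⟨hx1, hx2⟩ := hx
    rw [Finset.mem_filter, mem_lball', Function.update_self]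
    have hsum : ∑ i : Fin n, |Function.update x (Fin.last n) (x (Fin.last n) + 1) i.castSucc|
        = ∑ i : Fin n, |x i.castSucc| := Finset.sum_congr rfl fun i _ => by rw [update_castSucc]
    rw [hsum]
    have h1 : |x (Fin.last n)| = x (Fin.last n) := abs_of_nonneg hx2
    have h2 : |x (Fin.last n) + 1| = x (Fin.last n) + 1 := abs_of_nonneg (by omega)
    rw [h1] at hx1
    rw [h2]
    push_cast at hx1 ⊢
    constructor
    · linarith
    · simpa using by omega
  · intro x _
    funext i
    rcases eq_or_ne i (Fin.last n) with rfl | h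
    · simp
    · simp [Function.update_of_ne h]
  · intro x _
    funext i
    rcases eq_or_ne i (Fin.last n) with rfl | h
    · simp
    · simp [Function.update_of_ne h]

noncomputable def Pc (n r : ℕ) : ℕ := ((lball (n+1) r).filter fun x => 0 < x (Fin.last n)).card

lemma Kc_split (n r : ℕ) : Kc (n+1) r = Kc n r + 2 * Pc n r := by
  have e1 : ((lball (n+1) r).filter fun x => ¬ x (Fin.last n) = 0).filter
      (fun x => 0 < x (Fin.last n)) = (lball (n+1) r).filter fun x => 0 < x (Fin.last n) := by
    ext x
    simp only [Finset.mem_filter, and_assoc]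
    constructor
    · rintro ⟨g1, g2, g3⟩; exact ⟨g1, g3⟩
    · rintro ⟨g1, g2⟩; exact ⟨g1, by omega, g2⟩
  have e2 : ((lball (n+1) r).filter fun x => ¬ x (Fin.last n) = 0).filter
      (fun x => ¬ 0 < x (Fin.last n)) = (lball (n+1) r).filter fun x => x (Fin.last n) < 0 := by
    ext x
    simp only [Finset.mem_filter, and_assoc]
    constructor
    · rintro ⟨g1, g2, g3⟩; exact ⟨g1, by omega⟩
    · rintro ⟨g1, g2⟩; exact ⟨g1, by omega, by omega⟩
  have h1 := Finset.card_filter_add_card_filter_not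
    (s := lball (n+1) r) (p := fun x => x (Fin.last n) = 0)
  have h2 := Finset.card_filter_add_card_filter_not
    (s := (lball (n+1) r).filter fun x => ¬ x (Fin.last n) = 0)
    (p := fun x => 0 < x (Fin.last n))
  rw [card_last_zero] at h1
  rw [e1, e2, card_neg_pos] at h2
  have hK : (lball (n+1) r).card = Kc (n+1) r := rfl
  rw [hK] at h1
  have hP : ((lball (n+1) r).filter fun x => 0 < x (Fin.last n)).card = Pc n r := rfl
  rw [hP] at h2
  clear e1 e2 hK hP
  generalize hc : ((lball (n+1) r).filter fun x => ¬ x (Fin.last n) = 0).card = m at h1 h2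
  linarith

lemma Pc_succ (n e : ℕ) : Pc n (e+1) = Kc n e + Pc n e := by
  unfold Pc
  rw [card_shift]
  have e1 : ((lball (n+1) e).filter fun x => 0 ≤ x (Fin.last n)).filter
      (fun x => x (Fin.last n) = 0) = (lball (n+1) e).filter fun x => x (Fin.last n) = 0 := by
    ext x
    simp only [Finset.mem_filter, and_assoc]
    constructor
    · rintro ⟨g1, g2, g3⟩; exact ⟨g1, g3⟩
    · rintro ⟨g1, g2⟩; exact ⟨g1, by omega, g2⟩
  have e2 : ((lball (n+1) e).filter fun x => 0 ≤ x (Fin.last n)).filter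
      (fun x => ¬ x (Fin.last n) = 0) = (lball (n+1) e).filter fun x => 0 < x (Fin.last n) := by
    ext x
    simp only [Finset.mem_filter, and_assoc]
    constructor
    · rintro ⟨g1, g2, g3⟩; exact ⟨g1, by omega⟩
    · rintro ⟨g1, g2⟩; exact ⟨g1, by omega, by omega⟩
  have h1 := Finset.card_filter_add_card_filter_not
    (s := (lball (n+1) e).filter fun x => 0 ≤ x (Fin.last n))
    (p := fun x => x (Fin.last n) = 0)
  rw [e1, e2, card_last_zero] at h1
  exact h1.symm

lemma Kc_rec (n e : ℕ) : Kc (n+1) (e+1) = Kc n (e+1) + Kc (n+1) e + Kc n e := by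
  have h1 := Kc_split n (e+1)
  have h2 := Kc_split n e
  have h3 := Pc_succ n e
  linarith

def Fc (n e : ℕ) : ℕ := ∑ i ∈ Finset.range (n+1), 2^i * n.choose i * e.choose i

lemma Fc_ext (n e : ℕ) :
    ∑ i ∈ Finset.range (n+2), 2^i * n.choose i * e.choose i = Fc n e := by
  rw [Finset.sum_range_succ, Nat.choose_succ_self, mul_zero, zero_mul, add_zero]
  rfl

lemma fkey (n e M : ℕ) : ∑ i ∈ Finset.range (M+1), 2^i * n.choose i * e.choose i
    = 1 + 2 * ∑ i ∈ Finset.range M, 2^i * n.choose (i+1) * e.choose (i+1) := by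
  rw [Finset.sum_range_succ']
  simp only [pow_zero, Nat.choose_zero_right, mul_one, one_mul]
  rw [Finset.mul_sum, add_comm]
  congr 1
  exact Finset.sum_congr rfl fun i _ => by ring

lemma Fc_zero (m : ℕ) : Fc m 0 = 1 := by
  unfold Fc
  rw [Finset.sum_eq_single 0]
  · simp
  · intro i _ hi
    rw [Nat.choose_eq_zero_of_lt (Nat.pos_of_ne_zero hi), mul_zero]
  · simp

lemma Fc_zero_left (e : ℕ) : Fc 0 e = 1 := by
  unfold Fc
  simp

lemma Fc_rec (n e : ℕ) : Fc (n+1) (e+1) = Fc n (e+1) + Fc (n+1) e + Fc n e := by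
  have hA : Fc (n+1) (e+1) = 1 + ∑ i ∈ Finset.range (n+1),
      2^(i+1) * (n+1).choose (i+1) * (e+1).choose (i+1) := by
    unfold Fc
    rw [Finset.sum_range_succ']
    simp only [pow_zero, Nat.choose_zero_right, mul_one, one_mul]
    ring
  have hB : Fc n (e+1) = 1 + ∑ i ∈ Finset.range (n+1),
      2^(i+1) * n.choose (i+1) * (e+1).choose (i+1) := by
    rw [← Fc_ext n (e+1), Finset.sum_range_succ']
    simp only [pow_zero, Nat.choose_zero_right, mul_one, one_mul]
    ring
  have hC : Fc (n+1) e = 1 + ∑ i ∈ Finset.range (n+1),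
      2^(i+1) * (n+1).choose (i+1) * e.choose (i+1) := by
    unfold Fc
    rw [Finset.sum_range_succ']
    simp only [pow_zero, Nat.choose_zero_right, mul_one, one_mul]
    ring
  have hD : Fc n e = 1 + ∑ i ∈ Finset.range (n+1),
      2^(i+1) * n.choose (i+1) * e.choose (i+1) := by
    rw [← Fc_ext n e, Finset.sum_range_succ']
    simp only [pow_zero, Nat.choose_zero_right, mul_one, one_mul]
    ring
  -- termwise identity
  have hmain : ∀ i ∈ Finset.range (n+1),
      2^(i+1) * (n+1).choose (i+1) * (e+1).choose (i+1)
        + 2 * (2^(i+1) * n.choose (i+1) * e.choose (i+1))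
      = (2^(i+1) * n.choose (i+1) * (e+1).choose (i+1)
        + 2^(i+1) * (n+1).choose (i+1) * e.choose (i+1)
        + 2^(i+1) * n.choose (i+1) * e.choose (i+1))
        + 2^(i+1) * n.choose i * e.choose i := by
    intro i _
    rw [Nat.choose_succ_succ n i, Nat.choose_succ_succ e i]
    ring
  have hsum := Finset.sum_congr rfl hmain
  rw [Finset.sum_add_distrib, Finset.sum_add_distrib, Finset.sum_add_distrib,
    Finset.sum_add_distrib, ← Finset.mul_sum] at hsum
  -- the compensation identity
  have l1 : ∑ i ∈ Finset.range (n+1), 2^(i+1) * n.choose i * e.choose i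
      = 2 * ∑ i ∈ Finset.range (n+1), 2^i * n.choose i * e.choose i := by
    rw [Finset.mul_sum]
    exact Finset.sum_congr rfl fun i _ => by ring
  have l2 := fkey n e n
  have l3 : ∑ i ∈ Finset.range (n+1), 2^(i+1) * n.choose (i+1) * e.choose (i+1)
      = 2 * ∑ i ∈ Finset.range (n+1), 2^i * n.choose (i+1) * e.choose (i+1) := by
    rw [Finset.mul_sum]
    exact Finset.sum_congr rfl fun i _ => by ring
  have l4 : ∑ i ∈ Finset.range (n+1), 2^i * n.choose (i+1) * e.choose (i+1)
      = ∑ i ∈ Finset.range n, 2^i * n.choose (i+1) * e.choose (i+1) := by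
    rw [Finset.sum_range_succ, Nat.choose_succ_self, mul_zero, zero_mul, add_zero]
  rw [hA, hB, hC, hD]
  linarith

lemma Kc_eq_Fc (n : ℕ) : ∀ e, Kc n e = Fc n e := by
  induction n with
  | zero => intro e; rw [Kc_zero_left, Fc_zero_left]
  | succ n ih =>
    intro e
    induction e with
    | zero => rw [Kc_zero_right, Fc_zero]
    | succ e ihe => rw [Kc_rec, Fc_rec, ih, ih, ihe]

lemma Fc_min (n e : ℕ) : Fc n e
    = ∑ i ∈ Finset.range (min n e + 1), 2^i * n.choose i * e.choose i := by
  unfold Fc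
  refine (Finset.sum_subset (Finset.range_subset_range.mpr (by omega)) ?_).symm
  intro i hi hni
  rw [Finset.mem_range] at hi hni
  have : e < i := by omega
  rw [Nat.choose_eq_zero_of_lt this, mul_zero]

theorem lee_ball_card (n e : ℕ) (hn : 0 < n) (he : 0 < e) :
    Set.ncard {x : Fin n → ℤ | ∑ i, |x i| ≤ (e : ℤ)} =
      ∑ i ∈ Finset.range (min n e + 1), 2 ^ i * n.choose i * e.choose i := by
  have hset : {x : Fin n → ℤ | ∑ i, |x i| ≤ (e : ℤ)} = ↑(lball n e) := by
    ext x
    simp [mem_lball]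
  rw [hset, Set.ncard_coe_finset]
  have : (lball n e).card = Kc n e := rfl
  rw [this, Kc_eq_Fc, Fc_min]
end

section
/- Let n = Σ_{j=0}^{h-1} n_j·3^j and e = Σ_{j=0}^{h-1} e_j·3^j with digits n_j, e_j ∈ {0,1,2}. Then k(n,e) ≡ Π_{j=0}^{h-1} k(n_j, e_j) (mod 3), where k(n,e) = Σ_i 2^i C(n,i) C(e,i) is the size of the Lee ball of radius e in dimension n. -/
/-- The cardinality of the `n`-dimensional Lee ball of radius `e`. -/
def leeK (n e : ℕ) : ℕ := ∑ i ∈ Finset.range (min n e + 1), 2 ^ i * n.choose i * e.choose i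

lemma leeK_eq_sum (n e M : ℕ) (hM : min n e < M) :
    leeK n e = ∑ i ∈ Finset.range M, 2 ^ i * n.choose i * e.choose i := by
  apply Finset.sum_subset (Finset.range_subset_range.mpr hM)
  intro i _ hi
  simp only [Finset.mem_range, not_lt] at hi
  have : n < i ∨ e < i := by omega
  rcases this with h | h
  · rw [Nat.choose_eq_zero_of_lt h]; ring
  · rw [Nat.choose_eq_zero_of_lt h]; ring

lemma sum_range_three_mul {M : Type*} [AddCommMonoid M] (f : ℕ → M) (K : ℕ) :
    ∑ i ∈ Finset.range (3 * K), f i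
      = ∑ c ∈ Finset.range K, (f (3 * c) + f (3 * c + 1) + f (3 * c + 2)) := by
  induction K with
  | zero => simp
  | succ K ih =>
    rw [show 3 * (K + 1) = 3 * K + 1 + 1 + 1 by ring, Finset.sum_range_succ,
      Finset.sum_range_succ, Finset.sum_range_succ, ih, Finset.sum_range_succ]
    abel

lemma lucas3 (a r c t : ℕ) (hr : r < 3) (ht : t < 3) :
    (((3 * a + r).choose (3 * c + t) : ZMod 3)) = (r.choose t : ZMod 3) * (a.choose c : ZMod 3) := by
  haveI : Fact (Nat.Prime 3) := ⟨by norm_num⟩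
  have h := Choose.choose_modEq_choose_mod_mul_choose_div_nat (p := 3) (n := 3 * a + r)
    (k := 3 * c + t)
  have e1 : (3 * a + r) % 3 = r := by omega
  have e2 : (3 * a + r) / 3 = a := by omega
  have e3 : (3 * c + t) % 3 = t := by omega
  have e4 : (3 * c + t) / 3 = c := by omega
  rw [e1, e2, e3, e4] at h
  have := (ZMod.natCast_eq_natCast_iff _ _ _).mpr h
  push_cast at this
  exact this

lemma pow_two_zmod3 (c t : ℕ) : ((2 : ZMod 3)) ^ (3 * c + t) = 2 ^ c * 2 ^ t := by
  rw [pow_add, pow_mul, show ((2 : ZMod 3) ^ 3) = 2 from by decide]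

lemma term_eq (a b r s c t : ℕ) (hr : r < 3) (hs : s < 3) (ht : t < 3) :
    ((2 : ZMod 3)) ^ (3 * c + t) * ((3 * a + r).choose (3 * c + t) : ZMod 3)
        * ((3 * b + s).choose (3 * c + t) : ZMod 3)
      = ((2 : ZMod 3) ^ c * (a.choose c : ZMod 3) * (b.choose c : ZMod 3))
        * ((2 : ZMod 3) ^ t * (r.choose t : ZMod 3) * (s.choose t : ZMod 3)) := by
  rw [pow_two_zmod3, lucas3 a r c t hr ht, lucas3 b s c t hs ht]
  ring

lemma leeK_step (a b r s : ℕ) (hr : r < 3) (hs : s < 3) :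
    ((leeK (3 * a + r) (3 * b + s) : ZMod 3))
      = (leeK a b : ZMod 3) * (leeK r s : ZMod 3) := by
  set K := min a b + 1 with hK
  have hmin : min (3 * a + r) (3 * b + s) < 3 * K := by
    rcases le_total a b with hab | hab
    · calc min (3 * a + r) (3 * b + s) ≤ 3 * a + r := min_le_left _ _
        _ < 3 * K := by rw [hK, min_eq_left hab]; omega
    · calc min (3 * a + r) (3 * b + s) ≤ 3 * b + s := min_le_right _ _
        _ < 3 * K := by rw [hK, min_eq_right hab]; omega
  rw [leeK_eq_sum _ _ _ hmin]
  push_cast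
  rw [sum_range_three_mul (fun i => (2 : ZMod 3) ^ i
    * ((3 * a + r).choose i : ZMod 3) * ((3 * b + s).choose i : ZMod 3)) K]
  have hab : (leeK a b : ZMod 3)
      = ∑ c ∈ Finset.range K, (2 : ZMod 3) ^ c * (a.choose c : ZMod 3) * (b.choose c : ZMod 3) := by
    rw [leeK_eq_sum a b K (by omega)]; push_cast; rfl
  have hrs : (leeK r s : ZMod 3)
      = (2 : ZMod 3) ^ 0 * (r.choose 0 : ZMod 3) * (s.choose 0 : ZMod 3)
        + (2 : ZMod 3) ^ 1 * (r.choose 1 : ZMod 3) * (s.choose 1 : ZMod 3)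
        + (2 : ZMod 3) ^ 2 * (r.choose 2 : ZMod 3) * (s.choose 2 : ZMod 3) := by
    rw [leeK_eq_sum r s 3 (by omega)]
    push_cast
    rw [Finset.sum_range_succ, Finset.sum_range_succ, Finset.sum_range_succ,
      Finset.sum_range_zero, zero_add]
  rw [hab, hrs, Finset.sum_mul]
  apply Finset.sum_congr rfl
  intro c _
  have h0 := term_eq a b r s c 0 hr hs (by norm_num)
  have h1 := term_eq a b r s c 1 hr hs (by norm_num)
  have h2 := term_eq a b r s c 2 hr hs (by norm_num)
  simp only [Nat.add_zero] at h0
  rw [h0, h1, h2]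
  ring

lemma leeK_aux : ∀ (h : ℕ) (nd ed : ℕ → ℕ), (∀ j < h, nd j < 3) → (∀ j < h, ed j < 3) →
    ((leeK (∑ j ∈ Finset.range h, nd j * 3 ^ j) (∑ j ∈ Finset.range h, ed j * 3 ^ j) : ZMod 3))
      = ∏ j ∈ Finset.range h, (leeK (nd j) (ed j) : ZMod 3) := by
  intro h
  induction h with
  | zero => simp [leeK]
  | succ h ih =>
    intro nd ed hnd hed
    have hn : ∑ j ∈ Finset.range (h + 1), nd j * 3 ^ j
        = 3 * (∑ j ∈ Finset.range h, nd (j + 1) * 3 ^ j) + nd 0 := by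
      rw [Finset.sum_range_succ', Finset.mul_sum, pow_zero, mul_one]
      congr 1
      apply Finset.sum_congr rfl
      intro j _
      ring
    have he : ∑ j ∈ Finset.range (h + 1), ed j * 3 ^ j
        = 3 * (∑ j ∈ Finset.range h, ed (j + 1) * 3 ^ j) + ed 0 := by
      rw [Finset.sum_range_succ', Finset.mul_sum, pow_zero, mul_one]
      congr 1
      apply Finset.sum_congr rfl
      intro j _
      ring
    rw [hn, he, leeK_step _ _ _ _ (hnd 0 (by omega)) (hed 0 (by omega)),
      ih (fun j => nd (j + 1)) (fun j => ed (j + 1))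
        (fun j hj => hnd (j + 1) (by omega)) (fun j hj => hed (j + 1) (by omega)),
      Finset.prod_range_succ']

theorem leeK_multiplicative_mod_three (h : ℕ) (nd ed : ℕ → ℕ)
    (hnd : ∀ j < h, nd j < 3) (hed : ∀ j < h, ed j < 3) (n e : ℕ)
    (hn : n = ∑ j ∈ Finset.range h, nd j * 3 ^ j)
    (he : e = ∑ j ∈ Finset.range h, ed j * 3 ^ j) :
    leeK n e ≡ ∏ j ∈ Finset.range h, leeK (nd j) (ed j) [MOD 3] := by
  rw [← ZMod.natCast_eq_natCast_iff]
  push_cast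
  rw [hn, he]
  exact leeK_aux h nd ed hnd hed
end

section
/- If every digit in the base-3 representation of e belongs to {0,2} (i.e., e contains no digit 1 in base 3), then k(n,e) is not divisible by 3 for all positive integers n. -/
open Polynomial

lemma leeK_eq_range (n e : ℕ) :
    leeK n e = ∑ i ∈ Finset.range (e + 1), 2 ^ i * n.choose i * e.choose i := by
  rw [leeK]
  apply Finset.sum_subset
  · intro i hi
    simp only [Finset.mem_range] at hi ⊢
    omega
  · intro i hi hni
    simp only [Finset.mem_range] at hi hni
    have hn : n < i := by omega
    simp [Nat.choose_eq_zero_of_lt hn]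

lemma coeff_one_sub_X_pow (n k : ℕ) :
    ((1 - X : Polynomial (ZMod 3)) ^ n).coeff k = (-1) ^ k * (n.choose k : ZMod 3) := by
  have h1 : (1 - X : Polynomial (ZMod 3)) = C (-1) * (X + C (-1)) := by
    simp; ring
  rw [h1, mul_pow, ← map_pow, coeff_C_mul, coeff_X_add_C_pow]
  rcases le_or_gt k n with hk | hk
  · obtain ⟨m, rfl⟩ := Nat.exists_eq_add_of_le hk
    rw [Nat.add_sub_cancel_left]
    have h2 : ((-1 : ZMod 3)) ^ (k + m) * (-1) ^ m = (-1) ^ k := by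
      rw [pow_add, mul_assoc, ← pow_add, ← two_mul, pow_mul, neg_one_sq, one_pow, mul_one]
    rw [← mul_assoc, h2]
  · simp [Nat.choose_eq_zero_of_lt hk]

lemma leeK_cast (n e : ℕ) :
    ((leeK n e : ZMod 3)) = ((1 - X : Polynomial (ZMod 3)) ^ n * (1 + X) ^ e).coeff e := by
  rw [coeff_mul, Finset.Nat.sum_antidiagonal_eq_sum_range_succ_mk, leeK_eq_range]
  push_cast
  apply Finset.sum_congr rfl
  intro i hi
  simp only [Finset.mem_range] at hi
  rw [coeff_one_sub_X_pow, coeff_one_add_X_pow, Nat.choose_symm (by omega : i ≤ e)]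
  have h2 : (2 : ZMod 3) = -1 := by decide
  rw [h2]

lemma leeK_lucas (n e : ℕ) :
    ((leeK n e : ZMod 3)) = (leeK (n / 3) (e / 3) : ZMod 3) * (leeK (n % 3) (e % 3) : ZMod 3) := by
  have hn := Nat.div_add_mod n 3
  have he := Nat.div_add_mod e 3
  set a := n / 3 with ha
  set s := n % 3 with hsdef
  set f := e / 3 with hf
  set r := e % 3 with hrdef
  have hs : s < 3 := Nat.mod_lt _ (by norm_num)
  have hr : r < 3 := Nat.mod_lt _ (by norm_num)
  rw [leeK_cast, leeK_cast, leeK_cast]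
  have h3 : (1 - X : Polynomial (ZMod 3)) ^ 3 = 1 - X ^ 3 := by
    have := add_pow_char (R := Polynomial (ZMod 3)) (p := 3) 1 (-X)
    rw [one_pow] at this
    have hneg : ((-X : Polynomial (ZMod 3)) ^ 3) = -(X ^ 3) := Odd.neg_pow (by decide) X
    rw [hneg] at this
    rw [sub_eq_add_neg, this, ← sub_eq_add_neg]
  have h4 : (1 + X : Polynomial (ZMod 3)) ^ 3 = 1 + X ^ 3 := by
    have := add_pow_char (R := Polynomial (ZMod 3)) (p := 3) 1 X
    rw [one_pow] at this
    exact this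
  have key : (1 - X : Polynomial (ZMod 3)) ^ n * (1 + X) ^ e
      = expand (ZMod 3) 3 ((1 - X) ^ a * (1 + X) ^ f) * ((1 - X) ^ s * (1 + X) ^ r) := by
    simp only [map_mul, map_pow, map_sub, map_add, map_one, expand_X]
    rw [← h3, ← h4, ← pow_mul, ← pow_mul]
    conv_lhs => rw [← hn, ← he]
    rw [pow_add, pow_add]
    ring
  rw [key, coeff_mul]
  rw [Finset.sum_eq_single ((3 * f, r) : ℕ × ℕ)]
  · rw [coeff_expand_mul' (by norm_num : 0 < 3)]
  · rintro ⟨i, j⟩ hij hne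
    simp only [Finset.HasAntidiagonal.mem_antidiagonal] at hij
    rw [coeff_expand (by norm_num : 0 < 3)]
    by_cases h3i : 3 ∣ i
    · obtain ⟨t, rfl⟩ := h3i
      rw [if_pos (Dvd.intro t rfl)]
      have htf : t < f := by
        rcases lt_trichotomy t f with h | h | h
        · exact h
        · exfalso; apply hne; subst h
          have : j = r := by omega
          rw [this]
        · omega
      have hj : s + r < j := by omega
      have hz : ((1 - X : Polynomial (ZMod 3)) ^ s * (1 + X) ^ r).coeff j = 0 := by
        apply coeff_eq_zero_of_natDegree_lt
        have d1 : ((1 - X : Polynomial (ZMod 3)) ^ s).natDegree ≤ s := by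
          refine le_trans (natDegree_pow_le) ?_
          have hd : (1 - X : Polynomial (ZMod 3)).natDegree ≤ 1 := by
            refine le_trans (natDegree_sub_le _ _) ?_
            simp
          calc s * (1 - X : Polynomial (ZMod 3)).natDegree ≤ s * 1 :=
                Nat.mul_le_mul_left s hd
            _ = s := mul_one s
        have d2 : ((1 + X : Polynomial (ZMod 3)) ^ r).natDegree ≤ r := by
          refine le_trans (natDegree_pow_le) ?_
          have hd : (1 + X : Polynomial (ZMod 3)).natDegree ≤ 1 := by
            refine le_trans (natDegree_add_le _ _) ?_
            simp
          calc r * (1 + X : Polynomial (ZMod 3)).natDegree ≤ r * 1 :=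
                Nat.mul_le_mul_left r hd
            _ = r := mul_one r
      
        calc ((1 - X : Polynomial (ZMod 3)) ^ s * (1 + X) ^ r).natDegree
            ≤ _ + _ := natDegree_mul_le
          _ ≤ s + r := Nat.add_le_add d1 d2
          _ < j := hj
      rw [hz, mul_zero]
    · rw [if_neg h3i, zero_mul]
  · intro hmem
    exfalso
    apply hmem
    simp only [Finset.HasAntidiagonal.mem_antidiagonal]
    omega

theorem leeK_not_dvd_three_of_no_digit_one (e : ℕ)
    (he : ∀ d ∈ Nat.digits 3 e, d = 0 ∨ d = 2) :
    ∀ n : ℕ, 0 < n → ¬ (3 ∣ leeK n e) := by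
  have key : ∀ e : ℕ, (∀ d ∈ Nat.digits 3 e, d = 0 ∨ d = 2) →
      ∀ n : ℕ, ((leeK n e : ZMod 3)) ≠ 0 := by
    intro e
    induction e using Nat.strong_induction_on with
    | _ e ih =>
      intro he n
      rcases Nat.eq_zero_or_pos e with rfl | hpos
      · simp [leeK]
      · have hdig : Nat.digits 3 e = e % 3 :: Nat.digits 3 (e / 3) :=
          Nat.digits_def' (by norm_num) hpos
        have h1 : ∀ d ∈ Nat.digits 3 (e / 3), d = 0 ∨ d = 2 := by
          intro d hd
          exact he d (by rw [hdig]; exact List.mem_cons_of_mem _ hd)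
        have h2 : e % 3 = 0 ∨ e % 3 = 2 :=
          he _ (by rw [hdig]; exact List.mem_cons_self)
        have hlt : e / 3 < e := Nat.div_lt_self hpos (by norm_num)
        rw [leeK_lucas]
        intro h
        rcases mul_eq_zero.mp h with h' | h'
        · exact ih _ hlt h1 (n / 3) h'
        · have hs3 : n % 3 = 0 ∨ n % 3 = 1 ∨ n % 3 = 2 := by omega
          rcases h2 with h2 | h2 <;> rw [h2] at h' <;>
            rcases hs3 with hs | hs | hs <;> rw [hs] at h' <;> revert h' <;> decide
  intro n _ hdvd
  exact key e he n ((ZMod.natCast_eq_zero_iff _ _).mpr hdvd)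
end

section
/- For all positive integers n and e, p(n,e) ≡ 2 · Σ_{0 ≤ i ≤ e, i ≢ e (mod 3)} k(n−1, i) (mod 3), where p(n,e) = Σ_{i=0}^{e} 2i² k(n−1, e−i). -/
/-- `p(n,e) = Σ_{i=0}^{e} 2 i² k(n−1, e−i)`. -/
def leeP (n e : ℕ) : ℕ := ∑ i ∈ Finset.range (e + 1), 2 * i ^ 2 * leeK (n - 1) (e - i)

theorem leeP_mod_three_formula (n e : ℕ) (hn : 0 < n) (he : 0 < e) :
    leeP n e ≡
      2 * ∑ i ∈ (Finset.range (e + 1)).filter (fun i => i % 3 ≠ e % 3),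
        leeK (n - 1) i [MOD 3] := by
  unfold leeP
  rw [← Finset.sum_range_reflect, Finset.mul_sum, Finset.sum_filter]
  show _ % 3 = _ % 3
  conv_lhs => rw [Finset.sum_nat_mod]
  conv_rhs => rw [Finset.sum_nat_mod]
  congr 1
  apply Finset.sum_congr rfl
  intro j hj
  simp only [Finset.mem_range] at hj
  have hj' : j ≤ e := by omega
  have hsub : e + 1 - 1 - j = e - j := by omega
  rw [hsub, Nat.sub_sub_self hj']
  have h3 : (e - j) % 3 = 0 ↔ j % 3 = e % 3 := by omega
  have hcases : (e - j) % 3 = 0 ∨ (e - j) % 3 = 1 ∨ (e - j) % 3 = 2 := by omega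
  rcases hcases with h | h | h
  · have : ¬ (j % 3 ≠ e % 3) := by simp [h3.mp h]
    rw [if_neg this, Nat.mul_mod, Nat.mul_mod 2, Nat.pow_mod, h]
    simp
  · have : j % 3 ≠ e % 3 := by omega
    rw [if_pos this]
    conv_lhs => rw [Nat.mul_mod, Nat.mul_mod 2, Nat.pow_mod, h]
    conv_rhs => rw [Nat.mul_mod]
  · have : j % 3 ≠ e % 3 := by omega
    rw [if_pos this]
    conv_lhs => rw [Nat.mul_mod, Nat.mul_mod 2, Nat.pow_mod, h]
    conv_rhs => rw [Nat.mul_mod]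
end

section
/- Let p be a prime and let a = Σ_{i=0}^{m−1} a_i p^i, b = Σ_{i=0}^{m−1} b_i p^i with m ≥ 2, 0 ≤ a_i, b_i < p, and a_{m−1} = b_{m−1}. If a < b then the Davis–Webb product [a_{m−1},a_{m−2} ; b_{m−1},b_{m−2}] · Π_{i=1}^{m−2} [a_i ; b_i]^{−1} [a_i,a_{i−1} ; b_i,b_{i−1}] ≡ 0 (mod p²), so the Davis–Webb congruence C(a,b) ≡ (that product) (mod p²) holds even when a < b. -/
/-- Davis–Webb symbol `[a;b]` for digits `0 ≤ a, b < p`. -/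
def dwS (p a b : ℕ) : ℕ := if b ≤ a then a.choose b else p

/-- Davis–Webb symbol `[a,b;c,d]` for digits `0 ≤ a,b,c,d < p`. -/
def dwD (p a b c d : ℕ) : ℕ :=
  if c * p + d ≤ a * p + b then (a * p + b).choose (c * p + d) else p * dwS p b d

lemma dw_digits_sum_lt (p : ℕ) (hp : 1 ≤ p) (A : ℕ → ℕ) (j : ℕ) (h : ∀ i < j, A i < p) :
    ∑ i ∈ Finset.range j, A i * p ^ i < p ^ j := by
  induction j with
  | zero => simp
  | succ n ih =>
    rw [Finset.sum_range_succ]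
    have h1 : ∑ i ∈ Finset.range n, A i * p ^ i < p ^ n :=
      ih (fun i hi => h i (Nat.lt_succ_of_lt hi))
    have h2 : A n * p ^ n ≤ (p - 1) * p ^ n :=
      Nat.mul_le_mul_right _ (Nat.le_sub_one_of_lt (h n (Nat.lt_succ_self n)))
    have h3 : (p - 1) * p ^ n + p ^ n = p ^ (n + 1) := by
      have : (p - 1) * p ^ n + p ^ n = (p - 1 + 1) * p ^ n := by ring
      rw [this, Nat.sub_add_cancel hp, pow_succ, mul_comm]
    omega

lemma dw_key (p m : ℕ) (hp : 1 ≤ p) (hm : 1 ≤ m) (A B : ℕ → ℕ)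
    (hA : ∀ i < m, A i < p) (hB : ∀ i < m, B i < p)
    (htop : A (m - 1) = B (m - 1))
    (hab : ∑ i ∈ Finset.range m, A i * p ^ i < ∑ i ∈ Finset.range m, B i * p ^ i) :
    ∃ j, j + 1 < m ∧ A j < B j ∧ ∀ i, j < i → i < m → A i = B i := by
  classical
  set S := (Finset.range m).filter (fun i => A i ≠ B i) with hS
  have hSne : S.Nonempty := by
    by_contra h
    rw [Finset.not_nonempty_iff_eq_empty] at h
    have : ∀ i ∈ Finset.range m, A i * p ^ i = B i * p ^ i := by
      intro i hi
      have : i ∉ S := by rw [h]; exact Finset.notMem_empty i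
      simp only [hS, Finset.mem_filter, hi, true_and, not_not] at this
      rw [this]
    rw [Finset.sum_congr rfl this] at hab
    exact lt_irrefl _ hab
  set j := S.max' hSne with hj
  have hjS : j ∈ S := S.max'_mem hSne
  have hjm : j < m := Finset.mem_range.mp (Finset.mem_filter.mp hjS).1
  have hjne : A j ≠ B j := (Finset.mem_filter.mp hjS).2
  have heqabove : ∀ i, j < i → i < m → A i = B i := by
    intro i hji him
    by_contra h
    have : i ∈ S := Finset.mem_filter.mpr ⟨Finset.mem_range.mpr him, h⟩
    exact absurd (S.le_max' i this) (not_le.mpr hji)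
  have hjtop : j ≠ m - 1 := by
    intro h; exact hjne (h ▸ htop)
  have hjm1 : j + 1 < m := by omega
  refine ⟨j, hjm1, ?_, heqabove⟩
  -- split sums
  have hsplit : ∀ C : ℕ → ℕ, ∑ i ∈ Finset.range m, C i * p ^ i =
      (∑ i ∈ Finset.range j, C i * p ^ i) + C j * p ^ j +
        ∑ i ∈ Finset.Ico (j + 1) m, C i * p ^ i := by
    intro C
    rw [Finset.range_eq_Ico, ← Finset.sum_Ico_consecutive _ (Nat.zero_le (j + 1)) (le_of_lt hjm1),
      ← Finset.range_eq_Ico, Finset.sum_range_succ]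
  have htails : ∑ i ∈ Finset.Ico (j + 1) m, A i * p ^ i =
      ∑ i ∈ Finset.Ico (j + 1) m, B i * p ^ i := by
    apply Finset.sum_congr rfl
    intro i hi
    rw [Finset.mem_Ico] at hi
    rw [heqabove i (by omega) hi.2]
  rw [hsplit A, hsplit B, htails] at hab
  have hlt : (∑ i ∈ Finset.range j, A i * p ^ i) + A j * p ^ j <
      (∑ i ∈ Finset.range j, B i * p ^ i) + B j * p ^ j := by omega
  have hlowB : ∑ i ∈ Finset.range j, B i * p ^ i < p ^ j :=
    dw_digits_sum_lt p hp B j (fun i hi => hB i (by omega))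
  by_contra h
  have hBA : B j + 1 ≤ A j := by omega
  have h3 : (B j + 1) * p ^ j ≤ A j * p ^ j := Nat.mul_le_mul_right _ hBA
  have h4 : (B j + 1) * p ^ j = B j * p ^ j + p ^ j := by ring
  omega

theorem davis_webb_extension (p : ℕ) (hp : p.Prime) (m : ℕ) (hm : 2 ≤ m)
    (A B : ℕ → ℕ) (hA : ∀ i < m, A i < p) (hB : ∀ i < m, B i < p)
    (a b : ℕ) (ha : a = ∑ i ∈ Finset.range m, A i * p ^ i)
    (hb : b = ∑ i ∈ Finset.range m, B i * p ^ i)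
    (htop : A (m - 1) = B (m - 1)) (hab : a < b) :
    ((dwD p (A (m - 1)) (A (m - 2)) (B (m - 1)) (B (m - 2)) : ZMod (p ^ 2)) *
        ∏ i ∈ Finset.Icc 1 (m - 2),
          ((dwS p (A i) (B i) : ZMod (p ^ 2))⁻¹ *
            (dwD p (A i) (A (i - 1)) (B i) (B (i - 1)) : ZMod (p ^ 2))) = 0) ∧
    ((a.choose b : ZMod (p ^ 2)) =
      (dwD p (A (m - 1)) (A (m - 2)) (B (m - 1)) (B (m - 2)) : ZMod (p ^ 2)) *
        ∏ i ∈ Finset.Icc 1 (m - 2),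
          ((dwS p (A i) (B i) : ZMod (p ^ 2))⁻¹ *
            (dwD p (A i) (A (i - 1)) (B i) (B (i - 1)) : ZMod (p ^ 2)))) := by
  obtain ⟨j, hjm, hAB, heq⟩ := dw_key p m hp.one_lt.le (by omega) A B hA hB htop
      (ha ▸ hb ▸ hab)
  have hpp : ((p * p : ℕ) : ZMod (p ^ 2)) = 0 := by
    rw [← pow_two]; exact_mod_cast ZMod.natCast_self (p ^ 2)
  have hfac : ∀ x y z : ℕ, y < z → dwD p x y x z = p * p := by
    intro x y z hyz
    rw [dwD, if_neg (by omega), dwS, if_neg (by omega)]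
  have hzero : ((dwD p (A (m - 1)) (A (m - 2)) (B (m - 1)) (B (m - 2)) : ZMod (p ^ 2)) *
        ∏ i ∈ Finset.Icc 1 (m - 2),
          ((dwS p (A i) (B i) : ZMod (p ^ 2))⁻¹ *
            (dwD p (A i) (A (i - 1)) (B i) (B (i - 1)) : ZMod (p ^ 2))) = 0) := by
    by_cases hj2 : j = m - 2
    · have h1 : dwD p (A (m - 1)) (A (m - 2)) (B (m - 1)) (B (m - 2)) = p * p := by
        rw [htop]
        exact hfac _ _ _ (hj2 ▸ hAB)
      rw [h1, hpp, zero_mul]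
    · have hj3 : j + 1 ≤ m - 2 := by omega
      have hmem : j + 1 ∈ Finset.Icc 1 (m - 2) := Finset.mem_Icc.mpr ⟨by omega, hj3⟩
      have hAeq : A (j + 1) = B (j + 1) := heq (j + 1) (by omega) (by omega)
      have h1 : dwD p (A (j + 1)) (A (j + 1 - 1)) (B (j + 1)) (B (j + 1 - 1)) = p * p := by
        rw [hAeq]
        simpa using hfac (B (j + 1)) (A j) (B j) hAB
      rw [Finset.prod_eq_zero hmem (by rw [h1, hpp, mul_zero]), mul_zero]
  refine ⟨hzero, ?_⟩
  rw [Nat.choose_eq_zero_of_lt hab, Nat.cast_zero, hzero]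
end

section
/- Let n = 3^{m+1} + 3^m with m ≥ 1 and let i be a natural number. Then C(n, i) ≢ 0 (mod 9) if and only if i is of the form c·3^{m−1} with c ∈ {0,1,2,3,6,9,10,11,12}. Moreover, in that case C(n,i) ≡ 1 (mod 9) if c ∈ {0,12}, ≡ 3 if c ∈ {1,2,10,11}, ≡ 4 if c ∈ {3,9}, and ≡ 6 if c = 6. -/
open Polynomial

lemma nine_zero : (9 : (ZMod 9)[X]) = 0 := by
  have h : ((9:ℕ) : (ZMod 9)[X]) = (0:(ZMod 9)[X]) := by
    rw [← Polynomial.C_eq_natCast]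
    have : ((9:ℕ) : ZMod 9) = 0 := by decide
    rw [this, map_zero]
  exact_mod_cast h

lemma key (y : (ZMod 9)[X]) : (1+y)^9 = (1+y^3)^3 := by
  linear_combination (y + 4*y^2 + 9*y^3 + 14*y^4 + 14*y^5 + 9*y^6 + 4*y^7 + y^8) * nine_zero

lemma pow3 : ∀ m : ℕ, 1 ≤ m → ((1:(ZMod 9)[X])+X)^(3^m) = (1+X^(3^(m-1)))^3 := by
  intro m hm
  induction m with
  | zero => omega
  | succ k ih =>
    rcases Nat.eq_or_lt_of_le hm with h1 | h1
    · simp [← h1]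
    · have hk : 1 ≤ k := by omega
      have : ((1:(ZMod 9)[X])+X)^(3^(k+1)) = (((1:(ZMod 9)[X])+X)^(3^k))^3 := by
        rw [← pow_mul, pow_succ]
      rw [this, ih hk, ← pow_mul, show 3*3 = 9 from rfl, key, ← pow_mul]
      have hh : 3^(k-1) * 3 = 3^k := by
        conv_rhs => rw [show k = (k-1)+1 by omega]
        rw [pow_succ]
      rw [hh, Nat.succ_sub_one]

lemma main_poly (m : ℕ) (hm : 1 ≤ m) :
    ((1:(ZMod 9)[X])+X)^(3^(m+1)+3^m) = expand (ZMod 9) (3^(m-1)) ((1+X)^12) := by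
  have h4 : 3^(m+1)+3^m = 3^m * 4 := by ring
  rw [h4, pow_mul, pow3 m hm, ← pow_mul]
  rw [map_pow, map_add, map_one, expand_X]

lemma choose_fact (m : ℕ) (hm : 1 ≤ m) (j : ℕ) :
    Nat.choose (3^(m+1)+3^m) j % 9 =
      if 3^(m-1) ∣ j then Nat.choose 12 (j/3^(m-1)) % 9 else 0 := by
  have hq : 0 < 3^(m-1) := Nat.pow_pos (by norm_num)
  have h := congrArg (fun p => Polynomial.coeff p j) (main_poly m hm)
  simp only [coeff_one_add_X_pow, coeff_expand hq] at h
  by_cases hd : 3^(m-1) ∣ j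
  · rw [if_pos hd] at h ⊢
    have := (ZMod.natCast_eq_natCast_iff _ _ _).mp h
    simpa [Nat.ModEq, Nat.mod_mod_of_dvd] using this
  · rw [if_neg hd] at h ⊢
    have : ((Nat.choose (3^(m+1)+3^m) j : ℕ) : ZMod 9) = ((0:ℕ) : ZMod 9) := by
      simpa using h
    have := (ZMod.natCast_eq_natCast_iff _ _ _).mp this
    simpa [Nat.ModEq] using this

lemma table (c : ℕ) : Nat.choose 12 c % 9 ≠ 0 ↔ c ∈ ({0,1,2,3,6,9,10,11,12}:Finset ℕ) := by
  rcases le_or_gt c 12 with h | h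
  · interval_cases c <;> decide
  · rw [Nat.choose_eq_zero_of_lt h]
    simp only [Nat.zero_mod, ne_eq, not_true_eq_false, false_iff,
      Finset.mem_insert, Finset.mem_singleton]
    omega

theorem choose_mod_nine_classification (m i : ℕ) (hm : 1 ≤ m) (n : ℕ)
    (hn : n = 3 ^ (m + 1) + 3 ^ m) :
    (¬ n.choose i % 9 = 0 ↔
      ∃ c ∈ ({0, 1, 2, 3, 6, 9, 10, 11, 12} : Finset ℕ), i = c * 3 ^ (m - 1)) ∧
    (∀ c : ℕ, i = c * 3 ^ (m - 1) →
      ((c = 0 ∨ c = 12) → n.choose i % 9 = 1) ∧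
      ((c = 1 ∨ c = 2 ∨ c = 10 ∨ c = 11) → n.choose i % 9 = 3) ∧
      ((c = 3 ∨ c = 9) → n.choose i % 9 = 4) ∧
      (c = 6 → n.choose i % 9 = 6)) := by
  subst hn
  have hq : 0 < 3^(m-1) := Nat.pow_pos (by norm_num)
  have H := choose_fact m hm
  constructor
  · constructor
    · intro h
      by_cases hd : 3^(m-1) ∣ i
      · obtain ⟨c0, rfl⟩ := hd
        rw [H, if_pos ⟨c0, rfl⟩, Nat.mul_div_cancel_left _ hq] at h
        exact ⟨c0, (table c0).mp h, by ring⟩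
      · rw [H, if_neg hd] at h
        exact absurd rfl h
    · rintro ⟨c, hcS, rfl⟩
      rw [H, if_pos ⟨c, (mul_comm _ _)⟩, Nat.mul_div_cancel _ hq]
      exact (table c).mpr hcS
  · intro c hc
    have hkey : Nat.choose (3^(m+1)+3^m) i % 9 = Nat.choose 12 c % 9 := by
      rw [hc, H, if_pos ⟨c, (mul_comm _ _)⟩, Nat.mul_div_cancel _ hq]
    refine ⟨?_, ?_, ?_, ?_⟩
    · rintro (rfl | rfl) <;> rw [hkey] <;> decide
    · rintro (rfl | rfl | rfl | rfl) <;> rw [hkey] <;> decide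
    · rintro (rfl | rfl) <;> rw [hkey] <;> decide
    · rintro rfl; rw [hkey]; decide
end

section
/- Let n = 3^{m+1} + 3^m with m ≥ 2, h ≥ m+2, and j < 3^h with base-3 digits j = Σ_{i=0}^{h−1} j_i 3^i, j_i ∈ {0,1,2}. Then k(n−1, j) ≡ (1 − j_{m+1}) · (−1)^{j_0 + j_1 + ... + j_{m−1}} (mod 3). In particular k(n−1,j) mod 3 does not depend on the digit j_m. -/
open Finset
namespace LeeKAux
local instance : Fact (Nat.Prime 3) := ⟨by norm_num⟩
lemma lucas3 (n k : ℕ) :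
    ((n.choose k : ℕ) : ZMod 3) = ((n % 3).choose (k % 3) : ℕ) * ((n / 3).choose (k / 3) : ℕ) := by
  have h := (ZMod.intCast_eq_intCast_iff _ _ _).mpr
    (@Choose.choose_modEq_choose_mod_mul_choose_div n k 3 _)
  push_cast at h ⊢
  exact h
def S3 (N e : ℕ) : ZMod 3 :=
  ∑ i ∈ Finset.range (N + 1), (-1) ^ i * (N.choose i : ZMod 3) * (e.choose i : ZMod 3)
lemma S3_eq_sum (N e M : ℕ) (hM : N < M) :
    ∑ i ∈ Finset.range M, ((-1) ^ i * (N.choose i : ZMod 3) * (e.choose i : ZMod 3)) = S3 N e := by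
  rw [S3]; symm
  apply Finset.sum_subset (Finset.range_subset_range.mpr (by omega))
  intro i _ hi
  simp only [Finset.mem_range, not_lt] at hi
  rw [Nat.choose_eq_zero_of_lt (by omega)]; push_cast; ring
lemma sum_range_triple {M : Type*} [AddCommMonoid M] (f : ℕ → M) (n : ℕ) :
    ∑ i ∈ Finset.range (3 * n), f i
      = ∑ q ∈ Finset.range n, (f (3 * q) + f (3 * q + 1) + f (3 * q + 2)) := by
  induction n with
  | zero => simp
  | succ n ih =>
    rw [show 3 * (n + 1) = (3 * n + 2) + 1 by ring, Finset.sum_range_succ,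
      show 3 * n + 2 = (3 * n + 1) + 1 from rfl, Finset.sum_range_succ,
      Finset.sum_range_succ, ih, Finset.sum_range_succ]
    abel

lemma S3_step (a r e : ℕ) (hr : r < 3) :
    S3 (3 * a + r) e =
      (∑ i0 ∈ Finset.range 3,
        (-1) ^ i0 * (r.choose i0 : ZMod 3) * ((e % 3).choose i0 : ZMod 3)) * S3 a (e / 3) := by
  have h1 : S3 (3 * a + r) e = ∑ i ∈ Finset.range (3 * (a + 1)),
      ((-1) ^ i * ((3 * a + r).choose i : ZMod 3) * (e.choose i : ZMod 3)) :=
    (S3_eq_sum _ _ _ (by omega)).symm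
  rw [h1, sum_range_triple, S3, Finset.mul_sum]
  apply Finset.sum_congr rfl
  intro q _
  have key : ∀ c, c < 3 →
      ((-1 : ZMod 3)) ^ (3 * q + c) * ((3 * a + r).choose (3 * q + c) : ZMod 3)
        * (e.choose (3 * q + c) : ZMod 3)
      = ((-1) ^ c * (r.choose c : ZMod 3) * ((e % 3).choose c : ZMod 3))
        * ((-1) ^ q * (a.choose q : ZMod 3) * ((e / 3).choose q : ZMod 3)) := by
    intro c hc
    have e1 : (3 * a + r) % 3 = r := by omega
    have e2 : (3 * a + r) / 3 = a := by omega
    have e3 : (3 * q + c) % 3 = c := by omega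
    have e4 : (3 * q + c) / 3 = q := by omega
    have l1 := lucas3 (3 * a + r) (3 * q + c)
    have l2 := lucas3 e (3 * q + c)
    rw [e1, e2, e3, e4] at l1
    rw [e3, e4] at l2
    have sgn : ((-1 : ZMod 3)) ^ (3 * q + c) = (-1) ^ q * (-1) ^ c := by
      rw [pow_add, pow_mul]; norm_num
    rw [l1, l2, sgn]; ring
  have k0 := key 0 (by norm_num)
  have k1 := key 1 (by norm_num)
  have k2 := key 2 (by norm_num)
  rw [Nat.add_zero] at k0
  rw [k0, k1, k2, Finset.sum_range_succ, Finset.sum_range_succ, Finset.sum_range_one]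
  ring

lemma t_val (r d : ℕ) (hr : r < 3) (hd : d < 3) :
    (∑ i0 ∈ Finset.range 3,
      (-1 : ZMod 3) ^ i0 * (r.choose i0 : ZMod 3) * (d.choose i0 : ZMod 3)) =
      if r = 2 then (-1) ^ d else if r = 1 then 1 - (d : ZMod 3) else 1 := by
  interval_cases r <;> interval_cases d <;> decide

lemma S3_zero (e : ℕ) : S3 0 e = 1 := by simp [S3]

lemma chain (k b : ℕ) :
    S3 (4 * 3 ^ k - 1) b
      = (1 - (((b / 3 ^ (k + 1)) % 3 : ℕ) : ZMod 3))
        * (-1) ^ (∑ i ∈ Finset.range k, (b / 3 ^ i) % 3) := by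
  induction k generalizing b with
  | zero =>
    have h3 : (4 : ℕ) * 3 ^ 0 - 1 = 3 * 1 + 0 := by norm_num
    rw [h3, S3_step 1 0 b (by norm_num),
      t_val 0 (b % 3) (by norm_num) (Nat.mod_lt _ (by norm_num))]
    have h1 : (1 : ℕ) = 3 * 0 + 1 := by norm_num
    rw [h1, S3_step 0 1 (b / 3) (by norm_num),
      t_val 1 (b / 3 % 3) (by norm_num) (Nat.mod_lt _ (by norm_num)), S3_zero]
    simp
  | succ k ih =>
    have hx : (1 : ℕ) ≤ 3 ^ k := Nat.one_le_pow _ _ (by norm_num)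
    have hsplit : 4 * 3 ^ (k + 1) - 1 = 3 * (4 * 3 ^ k - 1) + 2 := by
      rw [pow_succ]; omega
    rw [hsplit, S3_step _ 2 b (by norm_num),
      t_val 2 (b % 3) (by norm_num) (Nat.mod_lt _ (by norm_num)), ih (b / 3)]
    have hd : ∀ i : ℕ, b / 3 / 3 ^ i = b / 3 ^ (i + 1) := by
      intro i
      rw [Nat.div_div_eq_div_mul, ← pow_succ']
    have hsum : ∑ i ∈ Finset.range (k + 1), b / 3 ^ i % 3
        = b % 3 + ∑ i ∈ Finset.range k, b / 3 / 3 ^ i % 3 := by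
      rw [Finset.sum_range_succ']
      simp only [hd]
      rw [add_comm]
      congr 1
      simp
    rw [hd (k + 1), hsum]
    simp only [if_true]
    rw [pow_add]
    ring

lemma low_lt (jd : ℕ → ℕ) (i : ℕ) (H : ∀ p < i, jd p < 3) :
    ∑ p ∈ Finset.range i, jd p * 3 ^ p < 3 ^ i := by
  induction i with
  | zero => simp
  | succ i ih =>
    have h1 := ih (fun p hp => H p (by omega))
    have h2 : jd i * 3 ^ i ≤ 2 * 3 ^ i :=
      Nat.mul_le_mul_right _ (by have := H i (by omega); omega)
    rw [Finset.sum_range_succ, pow_succ]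
    omega

lemma digit_extract (h : ℕ) (jd : ℕ → ℕ) (hjd : ∀ i < h, jd i < 3) (i : ℕ) (hi : i < h) :
    ((∑ p ∈ Finset.range h, jd p * 3 ^ p) / 3 ^ i) % 3 = jd i := by
  have hsplit : ∑ p ∈ Finset.range h, jd p * 3 ^ p
      = (∑ p ∈ Finset.range i, jd p * 3 ^ p)
        + 3 ^ i * ∑ p ∈ Finset.range (h - i), jd (i + p) * 3 ^ p := by
    rw [Finset.range_eq_Ico, ← Finset.sum_Ico_consecutive _ (Nat.zero_le i) (le_of_lt hi)]
    congr 1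
    · rw [Finset.range_eq_Ico]
    rw [Finset.sum_Ico_eq_sum_range, Finset.mul_sum]
    apply Finset.sum_congr rfl
    intro p _
    rw [pow_add]; ring
  have hlow : ∑ p ∈ Finset.range i, jd p * 3 ^ p < 3 ^ i :=
    low_lt jd i (fun p hp => hjd p (by omega))
  have hdiv : (∑ p ∈ Finset.range h, jd p * 3 ^ p) / 3 ^ i
      = ∑ p ∈ Finset.range (h - i), jd (i + p) * 3 ^ p := by
    rw [hsplit, Nat.add_mul_div_left _ _ (pow_pos (by norm_num) i),
      Nat.div_eq_of_lt hlow, zero_add]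
  have hpeel : ∑ p ∈ Finset.range (h - i), jd (i + p) * 3 ^ p
      = 3 * (∑ p ∈ Finset.range (h - i - 1), jd (i + (p + 1)) * 3 ^ p) + jd i := by
    have hhi : h - i = (h - i - 1) + 1 := by omega
    rw [hhi, Finset.sum_range_succ']
    simp only [add_zero, pow_zero, mul_one, Finset.mul_sum]
    congr 1
    apply Finset.sum_congr rfl
    intro p _
    rw [pow_succ]; ring
  rw [hdiv, hpeel, Nat.mul_add_mod, Nat.mod_eq_of_lt (hjd i hi)]

lemma sum_min_eq_S3 (N e : ℕ) :
    ∑ i ∈ Finset.range (min N e + 1),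
      ((-1 : ZMod 3) ^ i * (N.choose i : ZMod 3) * (e.choose i : ZMod 3)) = S3 N e := by
  rw [← S3_eq_sum N e (N + e + 1) (by omega)]
  apply Finset.sum_subset (Finset.range_subset_range.mpr (by omega))
  intro i _ hi
  simp only [Finset.mem_range, not_lt] at hi
  rcases Nat.lt_or_ge N e with hc | hc
  · rw [Nat.choose_eq_zero_of_lt (show N < i by omega)]; push_cast; ring
  · rw [Nat.choose_eq_zero_of_lt (show e < i by omega)]; push_cast; ring

end LeeKAux

open LeeKAux in
theorem leeK_special_formula (m h j : ℕ) (hm : 2 ≤ m) (hh : m + 2 ≤ h)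
    (hj : j < 3 ^ h) (jd : ℕ → ℕ) (hjd : ∀ i < h, jd i < 3)
    (hrep : j = ∑ i ∈ Finset.range h, jd i * 3 ^ i)
    (n : ℕ) (hn : n = 3 ^ (m + 1) + 3 ^ m) :
    (leeK (n - 1) j : ℤ) ≡
      (1 - (jd (m + 1) : ℤ)) * (-1) ^ (∑ i ∈ Finset.range m, jd i) [ZMOD 3] := by
  have hN : n - 1 = 4 * 3 ^ m - 1 := by
    have hx : 3 ^ (m + 1) = 3 ^ m * 3 := pow_succ 3 m
    omega
  have lhs : ((leeK (n - 1) j : ℕ) : ZMod 3) = S3 (n - 1) j := by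
    rw [leeK]
    push_cast
    rw [← sum_min_eq_S3]
    apply Finset.sum_congr rfl
    intro i _
    have h2 : (2 : ZMod 3) = -1 := by decide
    rw [h2]
  suffices hz : ((leeK (n - 1) j : ℤ) : ZMod 3)
      = (((1 - (jd (m + 1) : ℤ)) * (-1) ^ (∑ i ∈ Finset.range m, jd i) : ℤ) : ZMod 3) by
    exact_mod_cast (ZMod.intCast_eq_intCast_iff _ _ _).mp hz
  push_cast
  rw [lhs, hN, chain m j]
  have hd1 : j / 3 ^ (m + 1) % 3 = jd (m + 1) := by
    rw [hrep]; exact digit_extract h jd hjd (m + 1) (by omega)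
  have hd2 : ∑ i ∈ Finset.range m, j / 3 ^ i % 3 = ∑ i ∈ Finset.range m, jd i := by
    apply Finset.sum_congr rfl
    intro i hi
    simp only [Finset.mem_range] at hi
    rw [hrep]; exact digit_extract h jd hjd i (by omega)
  rw [hd1, hd2]
end

section
/- Let n = 3^{m+1} + 3^m with m ≥ 2, and let e be a positive integer whose largest base-3 digit equal to 1 occurs at position m+1 (i.e., δ_3(e) = m+1). Then p(n,e) ≡ 0 (mod 3), where p(n,e) = Σ_{i=0}^{e} 2i² k(n−1, e−i). -/
namespace LeeAux

open PowerSeries Finset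

abbrev R3 := ZMod 3
abbrev PS := PowerSeries R3

lemma three_eq_zero : (3 : PS) = 0 := by
  have h : ((3 : R3)) = 0 := by decide
  have : (3 : PS) = C (R := R3) 3 := by simp [map_ofNat]
  rw [this, h, map_zero]

lemma add_pow_three (a b : PS) : (a + b) ^ 3 = a ^ 3 + b ^ 3 := by
  linear_combination (a ^ 2 * b + a * b ^ 2) * three_eq_zero

lemma sub_pow_three (a b : PS) : (a - b) ^ 3 = a ^ 3 - b ^ 3 := by
  linear_combination (a * b ^ 2 - a ^ 2 * b) * three_eq_zero

lemma one_add_X_pow (k : ℕ) : ((1 + X) ^ 3 ^ k : PS) = 1 + X ^ 3 ^ k := by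
  induction k with
  | zero => simp
  | succ k ih =>
    rw [pow_succ, pow_mul, ih, add_pow_three, one_pow, ← pow_mul, ← pow_succ]

lemma one_sub_X_pow (k : ℕ) : ((1 - X) ^ 3 ^ k : PS) = 1 - X ^ 3 ^ k := by
  induction k with
  | zero => simp
  | succ k ih =>
    rw [pow_succ, pow_mul, ih, sub_pow_three, one_pow, ← pow_mul, ← pow_succ]

noncomputable def Dser (d : ℕ) : PS := PowerSeries.mk fun t => if d ∣ t then 1 else 0
noncomputable def Eser (d : ℕ) : PS :=
  PowerSeries.mk fun t => if d ∣ t then (if t = 0 then 1 else 2) else 0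

lemma dvd_sub_iff {d N : ℕ} (hle : d ≤ N) : d ∣ N ↔ d ∣ N - d := by
  constructor
  · exact fun h => Nat.dvd_sub h dvd_rfl
  · intro h
    have : N = (N - d) + d := by omega
    rw [this]
    exact Nat.dvd_add h dvd_rfl

lemma Dser_mul (d : ℕ) (hd : 0 < d) : (1 - X ^ d) * Dser d = 1 := by
  ext N
  rw [sub_mul, one_mul, map_sub, coeff_X_pow_mul']
  rcases Nat.eq_zero_or_pos N with rfl | hN
  · simp [Dser, hd.ne']
  · rw [coeff_one, if_neg hN.ne']
    by_cases hle : d ≤ N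
    · rw [if_pos hle]
      by_cases h : d ∣ N
      · simp [Dser, h, (dvd_sub_iff hle).mp h]
      · have h3 : ¬ d ∣ N - d := fun hc => h ((dvd_sub_iff hle).mpr hc)
        simp [Dser, h, h3]
    · rw [if_neg hle]
      have : ¬ d ∣ N := fun h => hle (Nat.le_of_dvd hN h)
      simp [Dser, this]

lemma Eser_mul (d : ℕ) (hd : 0 < d) : (1 - X ^ d) * Eser d = 1 + X ^ d := by
  ext N
  rw [sub_mul, one_mul, map_sub, coeff_X_pow_mul', map_add, coeff_one, coeff_X_pow]
  rcases Nat.eq_zero_or_pos N with rfl | hN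
  · simp [Eser, hd.ne, hd.ne']
  · rw [if_neg hN.ne']
    by_cases hle : d ≤ N
    · rw [if_pos hle]
      by_cases h : d ∣ N
      · rcases eq_or_lt_of_le hle with rfl | hlt
        · simp [Eser, hd.ne, hd.ne']
          decide
        · have h1 : N - d ≠ 0 := by omega
          have h2 : N ≠ d := by omega
          simp [Eser, h, (dvd_sub_iff hle).mp h, h1, h2, hN.ne']
      · have h2 : N ≠ d := by rintro rfl; exact h dvd_rfl
        have h3 : ¬ d ∣ N - d := fun hc => h ((dvd_sub_iff hle).mpr hc)
        simp [Eser, h, h3, h2]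
    · rw [if_neg hle]
      have h : ¬ d ∣ N := fun h => hle (Nat.le_of_dvd hN h)
      have h2 : N ≠ d := by rintro rfl; exact h dvd_rfl
      simp [Eser, h, h2]

lemma sum_multiples {M : Type*} [AddCommMonoid M] (d n : ℕ) (hd : 0 < d) (F : ℕ → M) :
    ∑ s ∈ range (n + 1), (if d ∣ s then F s else 0)
      = ∑ a ∈ range (n / d + 1), F (d * a) := by
  rw [← Finset.sum_filter]
  have himg : (range (n + 1)).filter (d ∣ ·) = (range (n / d + 1)).image (d * ·) := by
    ext s
    simp only [mem_filter, mem_range, mem_image]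
    constructor
    · rintro ⟨hs, a, rfl⟩
      exact ⟨a, by rw [Nat.lt_succ_iff] at *; exact Nat.le_div_iff_mul_le hd |>.mpr (by nlinarith), rfl⟩
    · rintro ⟨a, ha, rfl⟩
      rw [Nat.lt_succ_iff] at *
      exact ⟨(Nat.le_div_iff_mul_le hd |>.mp ha).trans_eq (by ring) |>.trans le_rfl |> fun h => by nlinarith [Nat.le_div_iff_mul_le hd |>.mp ha], ⟨a, rfl⟩⟩
  rw [himg, Finset.sum_image]
  intro a _ b _ hab
  exact Nat.eq_of_mul_eq_mul_left hd hab


lemma sum_f (Q : ℕ) : ∑ a ∈ range (Q + 1), (if a = 0 then (1 : R3) else 2) = 1 + 2 * Q := by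
  induction Q with
  | zero => simp
  | succ Q ih =>
    rw [Finset.sum_range_succ, ih]
    push_cast
    ring

lemma ED_coeff (m : ℕ) (hm : 1 ≤ m) (r : ℕ) :
    (PowerSeries.coeff (R := R3) r) (Eser (3 ^ m) * Dser 3)
      = if 3 ∣ r then 1 + 2 * ((r / 3 ^ m : ℕ) : R3) else 0 := by
  rw [coeff_mul, Finset.Nat.sum_antidiagonal_eq_sum_range_succ_mk]
  simp only [Eser, Dser, coeff_mk]
  have hpos : 0 < 3 ^ m := Nat.pow_pos (n := m) (by norm_num)
  have : ∀ s ∈ range (r + 1),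
      (if 3 ^ m ∣ s then (if s = 0 then (1:R3) else 2) else 0) * (if 3 ∣ r - s then (1:R3) else 0)
      = if 3 ^ m ∣ s then ((if s = 0 then (1:R3) else 2) * (if 3 ∣ r - s then (1:R3) else 0)) else 0 := by
    intro s _
    split_ifs <;> simp
  rw [Finset.sum_congr rfl this, sum_multiples _ _ hpos]
  have hdvd3 : (3:ℕ) ∣ 3 ^ m := dvd_pow_self 3 (by omega)
  by_cases h3r : 3 ∣ r
  · rw [if_pos h3r]
    have : ∀ a ∈ range (r / 3 ^ m + 1),
        (if 3 ^ m * a = 0 then (1:R3) else 2) * (if 3 ∣ r - 3 ^ m * a then (1:R3) else 0)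
          = (if a = 0 then (1:R3) else 2) := by
      intro a ha
      have h1 : 3 ∣ r - 3 ^ m * a := Nat.dvd_sub h3r (hdvd3.mul_right a)
      rw [if_pos h1, mul_one]
      congr 1
      simp [hpos.ne']
    rw [Finset.sum_congr rfl this, sum_f]
  · rw [if_neg h3r]
    apply Finset.sum_eq_zero
    intro a ha
    rw [mem_range, Nat.lt_succ_iff] at ha
    have hle : 3 ^ m * a ≤ r := by
      calc 3 ^ m * a = a * 3 ^ m := by ring
      _ ≤ r := (Nat.le_div_iff_mul_le hpos).mp ha
    have h1 : ¬ 3 ∣ r - 3 ^ m * a := by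
      intro hc
      exact h3r (by
        have : r = (r - 3 ^ m * a) + 3 ^ m * a := by omega
        rw [this]
        exact Nat.dvd_add hc (hdvd3.mul_right a))
    rw [if_neg h1, mul_zero]

lemma ABC_coeff (m : ℕ) (hm : 1 ≤ m) (N : ℕ) :
    (PowerSeries.coeff (R := R3) N) (Eser (3 ^ (m + 1)) * (Eser (3 ^ m) * Dser 3))
      = (if 3 ∣ N then 1 + 2 * ((N / 3 ^ m : ℕ) : R3) else 0)
          * (1 + 2 * ((N / 3 ^ (m + 1) : ℕ) : R3)) := by
  have hpos : 0 < 3 ^ (m + 1) := Nat.pow_pos (by norm_num)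
  have hdvd3 : (3 : ℕ) ∣ 3 ^ (m + 1) := dvd_pow_self 3 (by omega)
  have h3 : (3 : R3) = 0 := by decide
  rw [coeff_mul, Finset.Nat.sum_antidiagonal_eq_sum_range_succ_mk]
  have step1 : ∀ j ∈ range (N + 1),
      (coeff (R := R3) j) (Eser (3 ^ (m + 1))) * (coeff (R := R3) (N - j)) (Eser (3 ^ m) * Dser 3)
      = if 3 ^ (m + 1) ∣ j then
          ((if j = 0 then (1:R3) else 2) *
            (if 3 ∣ N - j then 1 + 2 * (((N - j) / 3 ^ m : ℕ) : R3) else 0)) else 0 := by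
    intro j _
    rw [ED_coeff m hm]
    simp only [Eser, coeff_mk]
    split_ifs <;> simp
  rw [Finset.sum_congr rfl step1, sum_multiples _ _ hpos]
  have step2 : ∀ a ∈ range (N / 3 ^ (m + 1) + 1),
      ((if 3 ^ (m + 1) * a = 0 then (1:R3) else 2) *
        (if 3 ∣ N - 3 ^ (m + 1) * a then 1 + 2 * (((N - 3 ^ (m + 1) * a) / 3 ^ m : ℕ) : R3) else 0))
      = (if a = 0 then (1:R3) else 2) *
          (if 3 ∣ N then 1 + 2 * ((N / 3 ^ m : ℕ) : R3) else 0) := by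
    intro a ha
    rw [mem_range, Nat.lt_succ_iff] at ha
    have hle : 3 ^ (m + 1) * a ≤ N := by
      calc 3 ^ (m + 1) * a = a * 3 ^ (m + 1) := by ring
      _ ≤ N := (Nat.le_div_iff_mul_le hpos).mp ha
    have hz : (3 ^ (m + 1) * a = 0) ↔ (a = 0) := by simp [hpos.ne']
    congr 1
    · simp [hz]
    · by_cases h3N : 3 ∣ N
      · have h1 : 3 ∣ N - 3 ^ (m + 1) * a := Nat.dvd_sub h3N (hdvd3.mul_right a)
        rw [if_pos h1, if_pos h3N]
        have hrw : 3 ^ (m + 1) * a = 3 ^ m * (3 * a) := by ring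
        have hle' : 3 ^ m * (3 * a) ≤ N := hrw ▸ hle
        have hdiv : (N - 3 ^ (m + 1) * a) / 3 ^ m = N / 3 ^ m - 3 * a := by
          rw [hrw, Nat.sub_mul_div _ _ _]
        have hle'' : 3 * a ≤ N / 3 ^ m :=
          (Nat.le_div_iff_mul_le (Nat.pow_pos (n := m) (by norm_num))).mpr
            (by calc 3 * a * 3 ^ m = 3 ^ m * (3 * a) := by ring
                _ ≤ N := hle')
        rw [hdiv, Nat.cast_sub hle'']
        push_cast
        linear_combination (-2 * (a : R3)) * h3
      · have h1 : ¬ 3 ∣ N - 3 ^ (m + 1) * a := by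
          intro hc
          exact h3N (by
            have hN : N = (N - 3 ^ (m + 1) * a) + 3 ^ (m + 1) * a := by omega
            rw [hN]
            exact Nat.dvd_add hc (hdvd3.mul_right a))
        rw [if_neg h1, if_neg h3N]
  rw [Finset.sum_congr rfl step2, ← Finset.sum_mul, sum_f]
  ring

lemma leeK_eq (r x M : ℕ) (hM : r ≤ M) :
    leeK r x = ∑ i ∈ range (M + 1), 2 ^ i * r.choose i * x.choose i := by
  unfold leeK
  apply Finset.sum_subset
  · apply Finset.range_subset_range.mpr
    have := min_le_left r x
    omega
  · intro i _ hi
    rw [mem_range, Nat.lt_succ_iff, not_le] at hi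
    rcases min_lt_iff.mp hi with h | h
    · simp [Nat.choose_eq_zero_of_lt h]
    · simp [Nat.choose_eq_zero_of_lt h]

lemma leeK_zero (x : ℕ) : leeK 0 x = 1 := by simp [leeK]

lemma leeK_rec (r e : ℕ) :
    leeK (r + 1) (e + 1) = leeK (r + 1) e + leeK r (e + 1) + leeK r e := by
  set M := r + e + 2 with hMdef
  rw [leeK_eq (r + 1) (e + 1) M (by omega), leeK_eq (r + 1) e M (by omega),
    leeK_eq r (e + 1) M (by omega), leeK_eq r e M (by omega),
    Finset.sum_range_succ' (fun i => 2 ^ i * (r + 1).choose i * (e + 1).choose i),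
    Finset.sum_range_succ' (fun i => 2 ^ i * (r + 1).choose i * e.choose i),
    Finset.sum_range_succ' (fun i => 2 ^ i * r.choose i * (e + 1).choose i),
    Finset.sum_range_succ' (fun i => 2 ^ i * r.choose i * e.choose i)]
  simp only [pow_zero, Nat.choose_zero_right, mul_one, one_mul]
  have hL : ∑ i ∈ range M, 2 ^ (i + 1) * (r + 1).choose (i + 1) * (e + 1).choose (i + 1)
      = (∑ i ∈ range M, 2 ^ (i + 1) * (r.choose i * e.choose i))
        + (∑ i ∈ range M, 2 ^ (i + 1) * (r.choose i * e.choose (i + 1)))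
        + (∑ i ∈ range M, 2 ^ (i + 1) * (r.choose (i + 1) * e.choose i))
        + (∑ i ∈ range M, 2 ^ (i + 1) * (r.choose (i + 1) * e.choose (i + 1))) := by
    rw [← Finset.sum_add_distrib, ← Finset.sum_add_distrib, ← Finset.sum_add_distrib]
    refine Finset.sum_congr rfl fun i _ => ?_
    simp only [Nat.choose_succ_succ']
    ring
  have hR1 : ∑ i ∈ range M, 2 ^ (i + 1) * (r + 1).choose (i + 1) * e.choose (i + 1)
      = (∑ i ∈ range M, 2 ^ (i + 1) * (r.choose i * e.choose (i + 1)))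
        + (∑ i ∈ range M, 2 ^ (i + 1) * (r.choose (i + 1) * e.choose (i + 1))) := by
    rw [← Finset.sum_add_distrib]
    refine Finset.sum_congr rfl fun i _ => ?_
    simp only [Nat.choose_succ_succ']
    ring
  have hR2 : ∑ i ∈ range M, 2 ^ (i + 1) * r.choose (i + 1) * (e + 1).choose (i + 1)
      = (∑ i ∈ range M, 2 ^ (i + 1) * (r.choose (i + 1) * e.choose i))
        + (∑ i ∈ range M, 2 ^ (i + 1) * (r.choose (i + 1) * e.choose (i + 1))) := by
    rw [← Finset.sum_add_distrib]
    refine Finset.sum_congr rfl fun i _ => ?_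
    simp only [Nat.choose_succ_succ']
    ring
  have hR3 : ∑ i ∈ range M, 2 ^ (i + 1) * r.choose (i + 1) * e.choose (i + 1)
      = ∑ i ∈ range M, 2 ^ (i + 1) * (r.choose (i + 1) * e.choose (i + 1)) := by
    refine Finset.sum_congr rfl fun i _ => ?_
    ring
  have hA : ∑ i ∈ range M, 2 ^ (i + 1) * (r.choose i * e.choose i)
      = 2 * (∑ i ∈ range M, 2 ^ (i + 1) * (r.choose (i + 1) * e.choose (i + 1))) + 2 := by
    have h1 : ∑ i ∈ range M, 2 ^ (i + 1) * (r.choose i * e.choose i)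
        = (∑ i ∈ range (r + e + 1), 2 ^ (i + 1 + 1) * (r.choose (i + 1) * e.choose (i + 1))) + 2 := by
      rw [show M = (r + e + 1) + 1 from rfl,
        Finset.sum_range_succ' (fun i => 2 ^ (i + 1) * (r.choose i * e.choose i)) (r + e + 1)]
      norm_num
    have h2 : ∑ i ∈ range M, 2 ^ (i + 1) * (r.choose (i + 1) * e.choose (i + 1))
        = ∑ i ∈ range (r + e + 1), 2 ^ (i + 1) * (r.choose (i + 1) * e.choose (i + 1)) := by
      rw [show M = (r + e + 1) + 1 from rfl, Finset.sum_range_succ,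
        Nat.choose_eq_zero_of_lt (show r < r + e + 1 + 1 by omega)]
      simp
    rw [h1, h2, Finset.mul_sum]
    congr 1
    refine Finset.sum_congr rfl fun i _ => ?_
    ring
  omega

lemma leeK_zero' (r : ℕ) : leeK r 0 = 1 := by simp [leeK]

noncomputable def Kser (r : ℕ) : PS := PowerSeries.mk fun x => (leeK r x : R3)
noncomputable def Iser : PS := PowerSeries.mk fun i => ((2 * i ^ 2 : ℕ) : R3)
noncomputable def Pser (n : ℕ) : PS := PowerSeries.mk fun x => (leeP n x : R3)

lemma Kser_step (r : ℕ) : (1 - X) * Kser (r + 1) = (1 + X) * Kser r := by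
  ext N
  rw [sub_mul, add_mul, one_mul, one_mul, map_sub, map_add]
  cases N with
  | zero => simp [Kser, leeK_zero']
  | succ N =>
    rw [coeff_succ_X_mul, coeff_succ_X_mul]
    simp only [Kser, coeff_mk]
    have := leeK_rec r N
    have hc : ((leeK (r + 1) (N + 1) : ℕ) : R3)
        = ((leeK (r + 1) N : ℕ) : R3) + ((leeK r (N + 1) : ℕ) : R3) + ((leeK r N : ℕ) : R3) := by
      rw [← Nat.cast_add, ← Nat.cast_add, ← this]
    rw [hc]
    ring

lemma Kser_id (r : ℕ) : (1 - X) ^ (r + 1) * Kser r = (1 + X) ^ r := by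
  induction r with
  | zero =>
    rw [pow_one, pow_zero]
    ext N
    cases N with
    | zero => simp [Kser, leeK_zero]
    | succ N =>
      rw [sub_mul, one_mul, map_sub, coeff_succ_X_mul]
      simp [Kser, leeK_zero, Nat.succ_ne_zero]
  | succ r ih =>
    have : (1 - X) ^ (r + 1 + 1) * Kser (r + 1) = (1 - X) ^ (r + 1) * ((1 - X) * Kser (r + 1)) := by
      ring
    rw [this, Kser_step, show (1 - X : PS) ^ (r + 1) * ((1 + X) * Kser r) = (1 + X) * ((1 - X) ^ (r + 1) * Kser r) from by ring, ih, ← pow_succ']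

lemma Iser_id : (1 - X ^ 3) * Iser = C (R := R3) 2 * (X + X ^ 2) := by
  ext N
  rw [sub_mul, one_mul, map_sub, coeff_X_pow_mul', coeff_C_mul, map_add, coeff_X, coeff_X_pow]
  simp only [Iser, coeff_mk]
  match N with
  | 0 => norm_num
  | 1 => norm_num
  | 2 => norm_num; decide
  | (k + 3) =>
    have h3 : 3 ≤ k + 3 := by omega
    rw [if_pos h3]
    have h1 : k + 3 ≠ 1 := by omega
    have h2 : k + 3 ≠ 2 := by omega
    rw [if_neg h1, if_neg h2]
    have : k + 3 - 3 = k := by omega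
    rw [this]
    have harith : (2 * (k + 3) ^ 2 : ℕ) = 2 * k ^ 2 + 3 * (4 * k + 6) := by ring
    rw [harith]
    push_cast
    have h30 : (3 : R3) = 0 := by decide
    rw [h30]
    ring

lemma Pser_eq (n : ℕ) : Pser n = Iser * Kser (n - 1) := by
  ext N
  rw [coeff_mul, Finset.Nat.sum_antidiagonal_eq_sum_range_succ_mk]
  simp only [Pser, Iser, Kser, coeff_mk, leeP]
  push_cast
  rfl

end LeeAux

open LeeAux PowerSeries Finset in
theorem leeP_dvd_three (m e : ℕ) (hm : 2 ≤ m) (he : 0 < e)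
    (hd : (e / 3 ^ (m + 1)) % 3 = 1)
    (hrest : ∀ i, m + 1 < i → (e / 3 ^ i) % 3 ≠ 1)
    (n : ℕ) (hn : n = 3 ^ (m + 1) + 3 ^ m) :
    3 ∣ leeP n e := by
  have hn1 : 1 ≤ n := by
    have : 0 < 3 ^ (m + 1) := by positivity
    omega
  obtain ⟨r, rfl⟩ : ∃ r, n = r + 1 := ⟨n - 1, by omega⟩
  have hr : r + 1 = 3 ^ (m + 1) + 3 ^ m := hn
  -- step 1: the two factorizations
  have e1 : ((1 - X) ^ (r + 1 + 3) : PS) * Pser (r + 1)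
      = C (R := R3) 2 * (X + X ^ 2) * (1 + X) ^ r := by
    have : ((1 - X) ^ (r + 1 + 3) : PS) * Pser (r + 1)
        = ((1 - X) ^ 3 * Iser) * ((1 - X) ^ (r + 1) * Kser r) := by
      rw [Pser_eq]
      simp only [Nat.add_sub_cancel]
      ring
    rw [this, show ((1 - X) ^ 3 : PS) = 1 - X ^ 3 from by
        have := one_sub_X_pow 1; norm_num at this; exact this,
      Iser_id, Kser_id]
  set T : PS := Eser (3 ^ (m + 1)) * (Eser (3 ^ m) * Dser 3) with hT
  have e2 : ((1 - X) ^ (r + 1 + 3) : PS) * (C (R := R3) 2 * (X * T))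
      = C (R := R3) 2 * (X + X ^ 2) * (1 + X) ^ r := by
    have hsplit : ((1 - X) ^ (r + 1 + 3) : PS)
        = (1 - X ^ 3 ^ (m + 1)) * ((1 - X ^ 3 ^ m) * (1 - X ^ 3)) := by
      rw [show r + 1 + 3 = 3 ^ (m + 1) + (3 ^ m + 3) from by omega,
        pow_add ((1 : PS) - X) (3 ^ (m + 1)) (3 ^ m + 3), pow_add ((1 : PS) - X) (3 ^ m) 3,
        one_sub_X_pow (m + 1), one_sub_X_pow m,
        show ((1 - X) ^ 3 : PS) = 1 - X ^ 3 from by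
          have := one_sub_X_pow 1; norm_num at this; exact this]
    rw [hsplit, hT]
    have h1 := Eser_mul (3 ^ (m + 1)) (by positivity)
    have h2 := Eser_mul (3 ^ m) (by positivity)
    have h3 := Dser_mul 3 (by norm_num)
    calc (1 - X ^ 3 ^ (m + 1)) * ((1 - X ^ 3 ^ m) * (1 - X ^ 3))
          * (C (R := R3) 2 * (X * (Eser (3 ^ (m + 1)) * (Eser (3 ^ m) * Dser 3))))
        = C (R := R3) 2 * X * (((1 - X ^ 3 ^ (m + 1)) * Eser (3 ^ (m + 1)))
            * (((1 - X ^ 3 ^ m) * Eser (3 ^ m)) * ((1 - X ^ 3) * Dser 3))) := by ring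
      _ = C (R := R3) 2 * X * ((1 + X ^ 3 ^ (m + 1)) * ((1 + X ^ 3 ^ m) * 1)) := by
          rw [h1, h2, h3]
      _ = C (R := R3) 2 * X * ((1 + X) ^ 3 ^ (m + 1) * (1 + X) ^ 3 ^ m) := by
          rw [one_add_X_pow (m + 1), one_add_X_pow m, mul_one]
      _ = C (R := R3) 2 * X * (1 + X) ^ (r + 1) := by rw [← pow_add, ← hr]
      _ = C (R := R3) 2 * (X + X ^ 2) * (1 + X) ^ r := by ring
  have hne : ((1 - X) ^ (r + 1 + 3) : PS) ≠ 0 := by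
    apply pow_ne_zero
    intro h
    have := congrArg (constantCoeff (R := R3)) h
    simp at this
  have hPQ : Pser (r + 1) = C (R := R3) 2 * (X * T) := mul_left_cancel₀ hne (e1.trans e2.symm)
  -- step 2: extract the coefficient
  obtain ⟨N, rfl⟩ : ∃ N, e = N + 1 := ⟨e - 1, by omega⟩
  have hco : ((leeP (r + 1) (N + 1) : ℕ) : R3) = 0 := by
    have : ((leeP (r + 1) (N + 1) : ℕ) : R3) = coeff (R := R3) (N + 1) (Pser (r + 1)) := by
      simp [Pser]
    rw [this, hPQ, coeff_C_mul, coeff_succ_X_mul, hT, ABC_coeff m (by omega)]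
    by_cases h3N : 3 ∣ N
    · have hB : 0 < 3 ^ (m + 1) := by positivity
      have h31 : ¬ (3 ∣ N + 1) := by omega
      have hs : ¬ 3 ^ (m + 1) ∣ (N + 1) := by
        intro hc
        exact h31 (dvd_trans (dvd_pow_self 3 (Nat.succ_ne_zero m)) hc)
      have hdiv : N / 3 ^ (m + 1) = (N + 1) / 3 ^ (m + 1) := by
        obtain ⟨q, s, hqs, hsB⟩ :
            ∃ q s, N + 1 = 3 ^ (m + 1) * q + s ∧ s < 3 ^ (m + 1) :=
          ⟨(N + 1) / 3 ^ (m + 1), (N + 1) % 3 ^ (m + 1),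
            (Nat.div_add_mod (N + 1) (3 ^ (m + 1))).symm, Nat.mod_lt (N + 1) hB⟩
        have hs1 : 1 ≤ s := by
          rcases Nat.eq_zero_or_pos s with rfl | h
          · exact absurd ⟨q, by omega⟩ hs
          · exact h
        have hq : (N + 1) / 3 ^ (m + 1) = q := by
          rw [hqs, Nat.mul_add_div hB, Nat.div_eq_of_lt hsB, add_zero]
        have hN : N = 3 ^ (m + 1) * q + (s - 1) := by omega
        rw [hq, hN, Nat.mul_add_div hB, Nat.div_eq_of_lt (show s - 1 < 3 ^ (m + 1) by omega),
          add_zero]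
      have hcast : ((N / 3 ^ (m + 1) : ℕ) : R3) = 1 := by
        rw [hdiv, ← ZMod.natCast_mod, hd]
        norm_num
      rw [hcast]
      have hz : (1 + 2 * 1 : R3) = 0 := by decide
      rw [hz, mul_zero, mul_zero]
    · rw [if_neg h3N, zero_mul, mul_zero]
  have := (ZMod.natCast_eq_zero_iff (leeP (r + 1) (N + 1)) 3).mp hco
  exact this
end

section
/- For the 3-dimensional Euclidean ball B = {b ∈ ℤ³ : b_1² + b_2² + b_3² ≤ 64}, one has #B = 2109 = 3·703 with 3 ∤ 703, and Σ_{b ∈ B} b_1² = 26688 ≡ 0 (mod 3). Consequently there is no lattice tiling of ℤ³ by B, i.e., no subgroup Λ ≤ ℤ³ such that the translates b + Λ for b ∈ B partition ℤ³ (equivalently, no abelian group G of order 2109 admits a homomorphism φ : ℤ³ → G restricting to a bijection on B). -/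
private noncomputable def A : Finset ℤ := Finset.Icc (-8) 8

private noncomputable def T : Finset (ℤ × ℤ × ℤ) :=
  (A ×ˢ A ×ˢ A).filter (fun p => p.1^2 + p.2.1^2 + p.2.2^2 ≤ 64)

private lemma sumT (f : ℤ × ℤ × ℤ → ℤ) :
    ∑ p ∈ T, f p =
      ∑ x ∈ A, ∑ y ∈ A, ∑ z ∈ A, if x^2+y^2+z^2 ≤ 64 then f (x,y,z) else 0 := by
  rw [T, Finset.sum_filter, Finset.sum_product]
  simp [Finset.sum_product]

set_option maxRecDepth 8000 in
private lemma cardT : T.card = 2109 := by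
  rw [T, Finset.card_filter, Finset.sum_product]
  simp only [Finset.sum_product]
  decide

set_option maxRecDepth 8000 in
private lemma sum00 : ∑ p ∈ T, p.1 * p.1 = 26688 := by rw [sumT]; decide
set_option maxRecDepth 8000 in
private lemma sum11 : ∑ p ∈ T, p.2.1 * p.2.1 = 26688 := by rw [sumT]; decide
set_option maxRecDepth 8000 in
private lemma sum22 : ∑ p ∈ T, p.2.2 * p.2.2 = 26688 := by rw [sumT]; decide
set_option maxRecDepth 8000 in
private lemma sum01 : ∑ p ∈ T, p.1 * p.2.1 = 0 := by rw [sumT]; decide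
set_option maxRecDepth 8000 in
private lemma sum02 : ∑ p ∈ T, p.1 * p.2.2 = 0 := by rw [sumT]; decide
set_option maxRecDepth 8000 in
private lemma sum12 : ∑ p ∈ T, p.2.1 * p.2.2 = 0 := by rw [sumT]; decide
set_option maxRecDepth 8000 in
private lemma sumSq : ∑ p ∈ T, p.1 ^ 2 = 26688 := by rw [sumT]; decide

private def m (p : ℤ × ℤ × ℤ) : Fin 3 → ℤ := ![p.1, p.2.1, p.2.2]

private lemma m_inj : Function.Injective m := by
  rintro ⟨a, b, c⟩ ⟨d, e, f⟩ h
  have h0 := congrFun h 0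
  have h1 := congrFun h 1
  have h2 := congrFun h 2
  simp [m] at h0 h1 h2
  simp [h0, h1, h2]

private noncomputable def F : Finset (Fin 3 → ℤ) := T.image m

private lemma hBF (B : Set (Fin 3 → ℤ))
    (hB : B = {b | b 0 ^ 2 + b 1 ^ 2 + b 2 ^ 2 ≤ 64}) : B = ↑F := by
  rw [hB]
  ext b
  simp only [Set.mem_setOf_eq, F, Finset.coe_image, Set.mem_image, Finset.mem_coe]
  constructor
  · intro h
    refine ⟨(b 0, b 1, b 2), ?_, ?_⟩
    · have h0 : b 0 ^ 2 ≥ 0 := sq_nonneg _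
      have h1 : b 1 ^ 2 ≥ 0 := sq_nonneg _
      have h2 : b 2 ^ 2 ≥ 0 := sq_nonneg _
      simp only [T, Finset.mem_filter, Finset.mem_product, A, Finset.mem_Icc]
      refine ⟨⟨⟨?_, ?_⟩, ⟨?_, ?_⟩, ⟨?_, ?_⟩⟩, by simpa using h⟩ <;> nlinarith
    · funext i
      fin_cases i <;> simp [m]
  · rintro ⟨p, hp, rfl⟩
    simp only [T, Finset.mem_filter] at hp
    simpa [m] using hp.2

private lemma sum_F (f : (Fin 3 → ℤ) → ℤ) : ∑ b ∈ F, f b = ∑ p ∈ T, f (m p) :=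
  Finset.sum_image (fun _ _ _ _ h => m_inj h)

private lemma card_F : F.card = T.card := Finset.card_image_of_injective _ m_inj

private lemma sF (i j : Fin 3) :
    ∑ b ∈ F, ((b i : ZMod 3) * (b j : ZMod 3)) = ((∑ b ∈ F, b i * b j : ℤ) : ZMod 3) := by
  rw [Int.cast_sum]
  simp

private lemma sF00 : ∑ b ∈ F, (b 0) * (b 0) = 26688 := by
  rw [sum_F]; simpa [m] using sum00
private lemma sF11 : ∑ b ∈ F, (b 1) * (b 1) = 26688 := by
  rw [sum_F]; simpa [m] using sum11
private lemma sF22 : ∑ b ∈ F, (b 2) * (b 2) = 26688 := by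
  rw [sum_F]; simpa [m] using sum22
private lemma sF01 : ∑ b ∈ F, (b 0) * (b 1) = 0 := by
  rw [sum_F]; simpa [m] using sum01
private lemma sF02 : ∑ b ∈ F, (b 0) * (b 2) = 0 := by
  rw [sum_F]; simpa [m] using sum02
private lemma sF12 : ∑ b ∈ F, (b 1) * (b 2) = 0 := by
  rw [sum_F]; simpa [m] using sum12

private lemma z00 : ∑ b ∈ F, ((b 0 : ZMod 3) * (b 0 : ZMod 3)) = 0 := by
  rw [sF, sF00]; decide
private lemma z11 : ∑ b ∈ F, ((b 1 : ZMod 3) * (b 1 : ZMod 3)) = 0 := by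
  rw [sF, sF11]; decide
private lemma z22 : ∑ b ∈ F, ((b 2 : ZMod 3) * (b 2 : ZMod 3)) = 0 := by
  rw [sF, sF22]; decide
private lemma z01 : ∑ b ∈ F, ((b 0 : ZMod 3) * (b 1 : ZMod 3)) = 0 := by
  rw [sF, sF01]; decide
private lemma z02 : ∑ b ∈ F, ((b 0 : ZMod 3) * (b 2 : ZMod 3)) = 0 := by
  rw [sF, sF02]; decide
private lemma z12 : ∑ b ∈ F, ((b 1 : ZMod 3) * (b 2 : ZMod 3)) = 0 := by
  rw [sF, sF12]; decide

set_option maxRecDepth 8000 in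
private lemma hzsum : ∑ z : ZMod 3, (703:ℕ) • z ^ 2 = 2 := by decide

private lemma myTwoNeZero : (2 : ZMod 3) ≠ 0 := by decide

set_option maxRecDepth 8000 in
private lemma noHom (B : Set (Fin 3 → ℤ)) (hB' : B = ↑F) :
    ∀ (G : Type) [AddCommGroup G], Nat.card G = 2109 →
      ∀ φ : (Fin 3 → ℤ) →+ G, ¬ Set.BijOn φ B Set.univ := by
  intro G _ hcard φ hφ
  have hfin : Finite G := Nat.finite_of_card_ne_zero (by rw [hcard]; norm_num)
  have h2109 : ∀ g : G, 2109 • g = 0 := by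
    intro g; rw [← hcard]; exact card_nsmul_eq_zero'
  set f : G →+ G := 703 • AddMonoidHom.id G with hf
  have hfapp : ∀ g : G, f g = 703 • g := fun g => rfl
  set T3 : AddSubgroup G := (3 • AddMonoidHom.id G : G →+ G).ker with hT3
  have memT3 : ∀ g : G, g ∈ T3 ↔ 3 • g = 0 := fun g => Iff.rfl
  have hmaps : ∀ g : G, f g ∈ T3 := by
    intro g
    rw [memT3, hfapp, smul_smul]
    exact h2109 g
  set f' : G →+ T3 := f.codRestrict T3 hmaps with hf'
  have hfix : ∀ t : T3, f' (t : G) = t := by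
    rintro ⟨t, ht⟩
    rw [memT3] at ht
    ext
    show (703 : ℕ) • t = t
    rw [show (703 : ℕ) = 234 * 3 + 1 from rfl, add_nsmul, mul_nsmul, smul_comm, ht, smul_zero,
      zero_add, one_nsmul]
  have hsurj : Function.Surjective f' := fun t => ⟨t, hfix t⟩
  have hdvd : Nat.card T3 ∣ 2109 := hcard ▸ AddSubgroup.card_addSubgroup_dvd_card T3
  haveI : Fact (Nat.Prime 3) := ⟨by norm_num⟩
  haveI : Fact (Nat.Prime 19) := ⟨by norm_num⟩
  haveI : Fact (Nat.Prime 37) := ⟨by norm_num⟩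
  have h3dvd : (3 : ℕ) ∣ Nat.card G := by rw [hcard]; norm_num
  obtain ⟨g3, hg3⟩ := exists_prime_addOrderOf_dvd_card' (G := G) 3 h3dvd
  have hg3T : g3 ∈ T3 := by rw [memT3, ← hg3]; exact addOrderOf_nsmul_eq_zero g3
  have hg3ne : g3 ≠ 0 := by
    intro h; rw [h, addOrderOf_zero] at hg3; norm_num at hg3
  haveI : Nontrivial T3 := ⟨⟨⟨g3, hg3T⟩, 0, by simp [hg3ne]⟩⟩
  have hne1 : Nat.card T3 ≠ 1 := Finite.one_lt_card_iff_nontrivial.mpr ‹_› |>.ne'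
  have horder : ∀ t : T3, addOrderOf t ∣ 3 := by
    intro t
    apply addOrderOf_dvd_of_nsmul_eq_zero
    ext
    exact (memT3 t).mp t.2
  have no19 : ¬ (19 ∣ Nat.card T3) := by
    intro h
    obtain ⟨t, ht⟩ := exists_prime_addOrderOf_dvd_card' (G := T3) 19 h
    have := horder t
    rw [ht] at this
    norm_num at this
  have no37 : ¬ (37 ∣ Nat.card T3) := by
    intro h
    obtain ⟨t, ht⟩ := exists_prime_addOrderOf_dvd_card' (G := T3) 37 h
    have := horder t
    rw [ht] at this
    norm_num at this
  have hcardT3 : Nat.card T3 = 3 := by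
    have c19 : (Nat.card T3).Coprime 19 :=
      Nat.coprime_comm.mp ((Nat.Prime.coprime_iff_not_dvd (by norm_num)).mpr no19)
    have c37 : (Nat.card T3).Coprime 37 :=
      Nat.coprime_comm.mp ((Nat.Prime.coprime_iff_not_dvd (by norm_num)).mpr no37)
    have d1 : Nat.card T3 ∣ 111 * 19 := by rw [show (111 : ℕ) * 19 = 2109 from rfl]; exact hdvd
    have d2 : Nat.card T3 ∣ 3 * 37 := Nat.Coprime.dvd_of_dvd_mul_right c19 d1
    have d3 : Nat.card T3 ∣ 3 := Nat.Coprime.dvd_of_dvd_mul_right c37 d2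
    rcases (Nat.prime_three).eq_one_or_self_of_dvd _ d3 with h | h
    · exact absurd h hne1
    · exact h
  have hcyc : IsAddCyclic T3 := isAddCyclic_of_prime_card hcardT3
  let e : ZMod 3 ≃+ T3 := (ZMod.ringEquivCongr hcardT3.symm).toAddEquiv.trans (zmodAddCyclicAddEquiv hcyc)
  let ψ : G →+ ZMod 3 := e.symm.toAddMonoidHom.comp f'
  have hψsurj : Function.Surjective ψ := e.symm.surjective.comp hsurj
  have hker : Nat.card ψ.ker = 703 := by
    have h1 := AddSubgroup.card_eq_card_quotient_mul_card_addSubgroup ψ.ker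
    have h2 : Nat.card (G ⧸ ψ.ker) = 3 := by
      rw [Nat.card_congr (QuotientAddGroup.quotientKerEquivOfSurjective ψ hψsurj).toEquiv,
        Nat.card_zmod]
    rw [hcard, h2] at h1
    omega
  have hfiber : ∀ z : ZMod 3, Nat.card {g : G // ψ g = z} = 703 := by
    intro z
    obtain ⟨g₀, hg₀⟩ := hψsurj z
    have e1 : {g : G // ψ g = z} ≃ ψ.ker := by
      refine ⟨fun g => ⟨g.1 - g₀, ?_⟩, fun k => ⟨k.1 + g₀, ?_⟩, ?_, ?_⟩
      · simp [AddMonoidHom.mem_ker, map_sub, g.2, hg₀]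
      · have := k.2
        rw [AddMonoidHom.mem_ker] at this
        simp [map_add, this, hg₀]
      · intro g; ext; simp
      · intro k; ext; simp
    rw [Nat.card_congr e1, hker]
  set χ : (Fin 3 → ℤ) →+ ZMod 3 := ψ.comp φ with hχ
  have hχapp : ∀ b, χ b = ψ (φ b) := fun b => rfl
  -- fiber counts inside F
  have key : ∀ z : ZMod 3, (F.filter (fun b => χ b = z)).card = 703 := by
    intro z
    have e2 : {b // b ∈ F.filter (fun b => χ b = z)} ≃ {g : G // ψ g = z} := by
      refine Equiv.ofBijective
        (fun b => ⟨φ b.1, (Finset.mem_filter.mp b.2).2⟩) ⟨?_, ?_⟩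
      · rintro ⟨b₁, h₁⟩ ⟨b₂, h₂⟩ h
        have hb₁ : b₁ ∈ B := by
          rw [hB']; exact Finset.mem_coe.mpr (Finset.mem_filter.mp h₁).1
        have hb₂ : b₂ ∈ B := by
          rw [hB']; exact Finset.mem_coe.mpr (Finset.mem_filter.mp h₂).1
        exact Subtype.ext (hφ.injOn hb₁ hb₂ (congrArg Subtype.val h))
      · rintro ⟨g, hg⟩
        obtain ⟨b, hb, rfl⟩ := hφ.surjOn (Set.mem_univ g)
        refine ⟨⟨b, Finset.mem_filter.mpr ⟨?_, hg⟩⟩, rfl⟩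
        rw [hB'] at hb
        exact Finset.mem_coe.mp hb
    rw [← Nat.card_eq_finsetCard, Nat.card_congr e2, hfiber z]
  -- decomposition of χ
  have hsingle : ∀ b : Fin 3 → ℤ,
      b = b 0 • Pi.single (0 : Fin 3) (1:ℤ) + b 1 • Pi.single 1 1 + b 2 • Pi.single 2 1 := by
    intro b; funext i; fin_cases i <;> simp
  set a0 : ZMod 3 := χ (Pi.single 0 1) with ha0
  set a1 : ZMod 3 := χ (Pi.single 1 1) with ha1
  set a2 : ZMod 3 := χ (Pi.single 2 1) with ha2
  have hrep : ∀ b : Fin 3 → ℤ,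
      χ b = (b 0 : ZMod 3) * a0 + (b 1 : ZMod 3) * a1 + (b 2 : ZMod 3) * a2 := by
    intro b
    conv_lhs => rw [hsingle b]
    rw [map_add, map_add, map_zsmul, map_zsmul, map_zsmul,
      zsmul_eq_mul, zsmul_eq_mul, zsmul_eq_mul]
  -- the sum of squares in two ways
  have hS1 : ∑ b ∈ F, (χ b)^2 = 2 := by
    rw [← Finset.sum_fiberwise F (fun b => χ b) (fun b => (χ b)^2)]
    have inner : ∀ z : ZMod 3,
        ∑ b ∈ F.filter (fun b => χ b = z), (χ b)^2 = 703 • z^2 := by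
      intro z
      rw [Finset.sum_congr rfl (fun b hb => by rw [(Finset.mem_filter.mp hb).2]),
        Finset.sum_const, key z]
    rw [Finset.sum_congr rfl (fun z _ => inner z)]
    exact hzsum
  have hS2 : ∑ b ∈ F, (χ b)^2 = 0 := by
    have expand : ∀ b ∈ F, (χ b)^2 =
        a0*a0*((b 0 : ZMod 3)*(b 0 : ZMod 3)) + a1*a1*((b 1 : ZMod 3)*(b 1 : ZMod 3)) +
        a2*a2*((b 2 : ZMod 3)*(b 2 : ZMod 3)) + (2*(a0*a1))*((b 0 : ZMod 3)*(b 1 : ZMod 3)) +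
        (2*(a0*a2))*((b 0 : ZMod 3)*(b 2 : ZMod 3)) +
        (2*(a1*a2))*((b 1 : ZMod 3)*(b 2 : ZMod 3)) := by
      intro b _
      rw [hrep b]; ring
    rw [Finset.sum_congr rfl expand]
    rw [Finset.sum_add_distrib, Finset.sum_add_distrib, Finset.sum_add_distrib,
      Finset.sum_add_distrib, Finset.sum_add_distrib,
      ← Finset.mul_sum, ← Finset.mul_sum, ← Finset.mul_sum, ← Finset.mul_sum,
      ← Finset.mul_sum, ← Finset.mul_sum, z00, z11, z22, z01, z02, z12]
    ring
  rw [hS1] at hS2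
  exact myTwoNeZero hS2

theorem no_lattice_tiling_euclidean_ball (B : Set (Fin 3 → ℤ))
    (hB : B = {b | b 0 ^ 2 + b 1 ^ 2 + b 2 ^ 2 ≤ 64}) :
    B.ncard = 2109 ∧ 2109 = 3 * 703 ∧ ¬ (3 ∣ 703) ∧
    (∑ᶠ b ∈ B, (b 0) ^ 2) = (26688 : ℤ) ∧ (3 : ℤ) ∣ 26688 ∧
    (¬ ∃ Λ : AddSubgroup (Fin 3 → ℤ), ∀ x : Fin 3 → ℤ,
      ∃! q : (Fin 3 → ℤ) × (Fin 3 → ℤ), q.1 ∈ B ∧ q.2 ∈ Λ ∧ q.1 + q.2 = x) ∧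
    (∀ (G : Type) [AddCommGroup G], Nat.card G = 2109 →
      ∀ φ : (Fin 3 → ℤ) →+ G, ¬ Set.BijOn φ B Set.univ) := by
  have hB' : B = ↑F := hBF B hB
  have hncard : B.ncard = 2109 := by
    rw [hB', Set.ncard_coe_finset, card_F, cardT]
  have h7 := noHom B hB'
  refine ⟨hncard, rfl, by norm_num, ?_, by norm_num, ?_, h7⟩
  · rw [hB', finsum_mem_coe_finset, sum_F]
    simpa [m] using sumSq
  · rintro ⟨Λ, hΛ⟩
    set G := (Fin 3 → ℤ) ⧸ Λ with hG
    set φ := QuotientAddGroup.mk' Λ with hφdef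
    have hbij : Set.BijOn φ B Set.univ := by
      refine ⟨fun _ _ => Set.mem_univ _, ?_, ?_⟩
      · intro b₁ hb₁ b₂ hb₂ h
        obtain ⟨z, hz, hzeq⟩ := (QuotientAddGroup.mk'_eq_mk' Λ).mp h
        obtain ⟨q, _, huniq⟩ := hΛ b₂
        have h1 := huniq (b₁, z) ⟨hb₁, hz, hzeq⟩
        have h2 := huniq (b₂, 0) ⟨hb₂, Λ.zero_mem, add_zero b₂⟩
        have := h1.trans h2.symm
        exact congrArg Prod.fst this
      · intro x _
        obtain ⟨y, rfl⟩ := QuotientAddGroup.mk'_surjective Λ x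
        obtain ⟨⟨b, z⟩, ⟨hbB, hzΛ, hsum⟩, _⟩ := hΛ y
        refine ⟨b, hbB, ?_⟩
        exact (QuotientAddGroup.mk'_eq_mk' Λ).mpr ⟨z, hzΛ, hsum⟩
    have hcardG : Nat.card G = 2109 := by
      have e1 : B ≃ (Set.univ : Set G) := Set.BijOn.equiv φ hbij
      have : Nat.card B = Nat.card G := by
        rw [Nat.card_congr e1, Nat.card_congr (Equiv.Set.univ G)]
      rw [← this, Nat.card_coe_set_eq, hncard]
    exact h7 G hcardG φ hbij
end
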